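/- arXiv:1211.5755 — 4 statements merged into one kernel-verified Lean document; each statement's English description precedes it below -/
import Mathlib

section
/- Let P ⊂ ℝ^N be an integral convex polytope of dimension d with μ_midp(P) ≤ (d−1)/2. Then μ_idp(P) ≤ (d−3)/2 + μ_midp(P). -/
open scoped BigOperators Pointwise

/-- Points of `ℝ^N`. -/
abbrev Pt (N : ℕ) := Fin N → ℝ

/-- A point has integer coordinates. -/
def IsLat {N : ℕ} (x : Pt N) : Prop := ∀ i, ∃ z : ℤ, x i = (z : ℝ)

/-- Lattice points of a set. -/
def latPts {N : ℕ} (P : Set (Pt N)) : Set (Pt N) := {x ∈ P | IsLat x}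

/-- The dilated polytope `kP`. -/
def dil {N : ℕ} (k : ℕ) (P : Set (Pt N)) : Set (Pt N) := (k : ℝ) • P

/-- `α` is a sum of `k` lattice points of `P`. -/
def DecomposesIn {N : ℕ} (P : Set (Pt N)) (k : ℕ) (α : Pt N) : Prop :=
  ∃ f : Fin k → Pt N, (∀ i, f i ∈ latPts P) ∧ α = ∑ i, f i

/-- The integer decomposition property. -/
def HasIDP {N : ℕ} (P : Set (Pt N)) : Prop :=
  ∀ k : ℕ, 0 < k → ∀ α ∈ latPts (dil k P), DecomposesIn P k α

/-- Very ampleness: decomposition holds for all sufficiently large `k`. -/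
def VeryAmple {N : ℕ} (P : Set (Pt N)) : Prop :=
  ∃ k₀ : ℕ, ∀ k, k₀ ≤ k → ∀ α ∈ latPts (dil k P), DecomposesIn P k α

/-- An integral convex polytope: the convex hull of finitely many lattice points
(which include all its vertices). -/
def IsIntegralPolytope {N : ℕ} (P : Set (Pt N)) : Prop :=
  ∃ V : Finset (Pt N), (∀ v ∈ V, IsLat v) ∧ P = convexHull ℝ (V : Set (Pt N))

/-- Dimension of a polytope: the rank of the direction of its affine span. -/
noncomputable def polyDim {N : ℕ} (P : Set (Pt N)) : ℕ :=
  Module.finrank ℝ (affineSpan ℝ P).direction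

/-- Lattice points of the cone `C(P) ⊂ ℝ^{N+1}` generated by `P̃ = P × {1}`;
a point of `ℝ^{N+1}` is represented as a pair `(x, deg)`. -/
def coneLat {N : ℕ} (P : Set (Pt N)) : Set (Pt N × ℝ) :=
  {p | (∃ (m : ℕ) (c : Fin m → ℝ) (w : Fin m → Pt N),
        (∀ i, 0 ≤ c i ∧ w i ∈ P) ∧ p.1 = ∑ i, c i • w i ∧ p.2 = ∑ i, c i)
    ∧ IsLat p.1 ∧ ∃ z : ℤ, p.2 = (z : ℝ)}

/-- The monoid `ℤ_{≥0}(P̃ ∩ ℤ^{N+1})` generated by the degree-one lattice points of the cone. -/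
def genMonoid {N : ℕ} (P : Set (Pt N)) : Set (Pt N × ℝ) :=
  {p | ∃ (m : ℕ) (f : Fin m → Pt N), (∀ i, f i ∈ latPts P) ∧
        p.1 = ∑ i, f i ∧ p.2 = (m : ℝ)}

/-- `H` is the minimal Hilbert basis of the cone `C(P)`. -/
def IsMinHilbertBasis {N : ℕ} (P : Set (Pt N)) (H : Set (Pt N × ℝ)) : Prop :=
  (H.Finite ∧ H ⊆ coneLat P ∧
      coneLat P ⊆ (AddSubmonoid.closure H : Set (Pt N × ℝ))) ∧
  ∀ H' : Set (Pt N × ℝ),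
    (H'.Finite ∧ H' ⊆ coneLat P ∧
      coneLat P ⊆ (AddSubmonoid.closure H' : Set (Pt N × ℝ))) → H ⊆ H'

/-- `v` lists the vertices of an empty `d`-simplex contained in `P`. -/
def EmptySimplexIn {N : ℕ} (P : Set (Pt N)) (d : ℕ) (v : Fin (d+1) → Pt N) : Prop :=
  (∀ i, v i ∈ latPts P) ∧ AffineIndependent ℝ v ∧
    ∀ x ∈ convexHull ℝ (Set.range v), IsLat x → x ∈ Set.range v

/-- `Box(S)` of a simplex with vertex list `v`: lattice points
`Σ rᵢ (vᵢ, 1)` with `0 ≤ rᵢ < 1`. -/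
def boxSimplex {N d : ℕ} (v : Fin (d+1) → Pt N) : Set (Pt N × ℝ) :=
  {p | ∃ r : Fin (d+1) → ℝ, (∀ i, 0 ≤ r i ∧ r i < 1) ∧
      p.1 = ∑ i, r i • v i ∧ p.2 = ∑ i, r i ∧ IsLat p.1 ∧ ∃ z : ℤ, p.2 = (z : ℝ)}

/-- `Box(P)`: holes of `P`, i.e. box points of empty `d`-simplices in `P` that are not
nonnegative integer combinations of `P̃ ∩ ℤ^{N+1}`. -/
def boxP {N : ℕ} (P : Set (Pt N)) (d : ℕ) : Set (Pt N × ℝ) :=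
  (⋃ v ∈ {v : Fin (d+1) → Pt N | EmptySimplexIn P d v}, boxSimplex v) \ genMonoid P

/-- Ehrhart counting function `|nP ∩ ℤ^N|`. -/
noncomputable def ehr {N : ℕ} (P : Set (Pt N)) (n : ℕ) : ℕ := (latPts (dil n P)).ncard

/-- The `δ`-vector of a `d`-dimensional polytope, via finite differences of the
Ehrhart counting function. -/
noncomputable def deltaVec {N : ℕ} (P : Set (Pt N)) (d i : ℕ) : ℤ :=
  ∑ j ∈ Finset.range (i+1), (-1)^j * ((d+1).choose j) * (ehr P (i - j) : ℤ)

section Aux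

open Finset

variable {N : ℕ}

lemma isLat_zero : IsLat (0 : Pt N) := fun i => ⟨0, by simp⟩

lemma isLat_add {x y : Pt N} (hx : IsLat x) (hy : IsLat y) : IsLat (x + y) := by
  intro i
  obtain ⟨a, ha⟩ := hx i
  obtain ⟨b, hb⟩ := hy i
  exact ⟨a + b, by simp [Pi.add_apply, ha, hb]⟩

lemma isLat_sub {x y : Pt N} (hx : IsLat x) (hy : IsLat y) : IsLat (x - y) := by
  intro i
  obtain ⟨a, ha⟩ := hx i
  obtain ⟨b, hb⟩ := hy i
  exact ⟨a - b, by simp [Pi.sub_apply, ha, hb]⟩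

lemma isLat_finsetSum {ι : Type*} (s : Finset ι) (f : ι → Pt N)
    (h : ∀ i ∈ s, IsLat (f i)) : IsLat (∑ i ∈ s, f i) := by
  classical
  induction s using Finset.cons_induction with
  | empty => simpa using isLat_zero
  | cons a s' hne ih =>
    rw [Finset.sum_cons]
    exact isLat_add (h a (Finset.mem_cons_self a s'))
      (ih fun i hi => h i (Finset.mem_cons_of_mem hi))

lemma dil_dil (a b : ℕ) (P : Set (Pt N)) : dil a (dil b P) = dil (a * b) P := by
  unfold dil
  rw [smul_smul]
  norm_cast

lemma dil_one (P : Set (Pt N)) : dil 1 P = P := by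
  unfold dil
  norm_num

lemma mem_latPts {P : Set (Pt N)} {x : Pt N} : x ∈ latPts P ↔ x ∈ P ∧ IsLat x := Iff.rfl

lemma add_mem_dil {P : Set (Pt N)} (hconv : Convex ℝ P) {a b : ℕ} {x y : Pt N}
    (hx : x ∈ dil a P) (hy : y ∈ dil b P) : x + y ∈ dil (a + b) P := by
  obtain ⟨x', hx', rfl⟩ := hx
  obtain ⟨y', hy', rfl⟩ := hy
  rcases Nat.eq_zero_or_pos a with rfl | ha
  · simpa using ⟨y', hy', rfl⟩
  rcases Nat.eq_zero_or_pos b with rfl | hb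
  · simpa using ⟨x', hx', rfl⟩
  have hab : (0:ℝ) < (a:ℝ) + (b:ℝ) := by positivity
  refine ⟨((a:ℝ)/((a:ℝ)+(b:ℝ))) • x' + ((b:ℝ)/((a:ℝ)+(b:ℝ))) • y',
    hconv hx' hy' (by positivity) (by positivity) ?_, ?_⟩
  · field_simp
  · push_cast
    rw [smul_add, smul_smul, smul_smul]
    rw [mul_div_cancel₀ _ (ne_of_gt hab), mul_div_cancel₀ _ (ne_of_gt hab)]

lemma add_mem_latPts_dil {P : Set (Pt N)} (hconv : Convex ℝ P) {a b : ℕ} {x y : Pt N}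
    (hx : x ∈ latPts (dil a P)) (hy : y ∈ latPts (dil b P)) :
    x + y ∈ latPts (dil (a + b) P) :=
  ⟨add_mem_dil hconv hx.1 hy.1, isLat_add hx.2 hy.2⟩

lemma sum_mem_latPts_dil {P : Set (Pt N)} (hconv : Convex ℝ P) (hne : P.Nonempty) {c : ℕ} :
    ∀ {m : ℕ} (f : Fin m → Pt N), (∀ i, f i ∈ latPts (dil c P)) →
      (∑ i, f i) ∈ latPts (dil (m * c) P) := by
  intro m
  induction m with
  | zero =>
    intro f _
    have h0 : (∑ i : Fin 0, f i) = 0 := by simp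
    have h0' : 0 * c = 0 := by ring
    rw [h0, h0']
    refine ⟨?_, isLat_zero⟩
    show (0 : Pt N) ∈ dil 0 P
    unfold dil
    push_cast
    rw [Set.zero_smul_set hne]
    exact Set.zero_mem_zero
  | succ m ih =>
    intro f hf
    have h1 : ∑ i, f i = f 0 + ∑ i : Fin m, f i.succ := Fin.sum_univ_succ f
    have h2 : (m + 1) * c = c + m * c := by ring
    rw [h1, h2]
    exact add_mem_latPts_dil hconv (hf 0) (ih (fun i => f i.succ) (fun i => hf i.succ))

end Aux
section Aux2

open Finset

variable {N : ℕ}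

lemma finite_latPts_hull (S : Finset (Pt N)) :
    (latPts (convexHull ℝ (S : Set (Pt N)))).Finite := by
  classical
  rcases S.eq_empty_or_nonempty with rfl | hS
  · simp only [Finset.coe_empty, convexHull_empty]
    have : latPts (∅ : Set (Pt N)) = ∅ := by
      ext x; simp [latPts]
    rw [this]; exact Set.finite_empty
  · set lo : Fin N → ℝ := fun i => (S.image (fun v => v i)).min' (hS.image (fun v => v i)) with hlo
    set hi : Fin N → ℝ := fun i => (S.image (fun v => v i)).max' (hS.image (fun v => v i)) with hhi
    have key : ∀ x ∈ convexHull ℝ (S : Set (Pt N)), ∀ i, x i ∈ Set.Icc (lo i) (hi i) := by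
      have hsub : convexHull ℝ (S : Set (Pt N)) ⊆
          ⋂ i : Fin N, {x : Pt N | x i ∈ Set.Icc (lo i) (hi i)} := by
        apply convexHull_min
        · intro v hv
          simp only [Set.mem_iInter, Set.mem_setOf_eq]
          intro i
          have hv' : v ∈ S := Finset.mem_coe.1 hv
          constructor
          · exact Finset.min'_le _ _ (Finset.mem_image_of_mem (fun v => v i) hv')
          · exact Finset.le_max' _ _ (Finset.mem_image_of_mem (fun v => v i) hv')
        · apply convex_iInter
          intro i
          have : {x : Pt N | x i ∈ Set.Icc (lo i) (hi i)} =
              (LinearMap.proj (R := ℝ) (φ := fun _ : Fin N => ℝ) i) ⁻¹' (Set.Icc (lo i) (hi i)) := rfl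
          rw [this]
          exact (convex_Icc _ _).linear_preimage _
      intro x hx i
      have := hsub hx
      simp only [Set.mem_iInter, Set.mem_setOf_eq] at this
      exact this i
    set T : Fin N → Set ℝ := fun i =>
      {r : ℝ | r ∈ Set.Icc (lo i) (hi i) ∧ ∃ z : ℤ, r = (z : ℝ)} with hT
    have hTfin : ∀ i, (T i).Finite := by
      intro i
      apply Set.Finite.subset ((Set.finite_Icc (⌈lo i⌉) (⌊hi i⌋)).image (fun z : ℤ => (z : ℝ)))
      rintro r ⟨⟨h1, h2⟩, z, rfl⟩
      exact ⟨z, ⟨Int.ceil_le.2 h1, Int.le_floor.2 h2⟩, rfl⟩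
    apply Set.Finite.subset (Set.Finite.pi hTfin)
    rintro x ⟨hxP, hxL⟩
    rw [Set.mem_pi]
    intro i _
    exact ⟨key x hxP i, hxL i⟩

lemma card_le_dim {t : Finset (Pt N)} {P : Set (Pt N)} (hP : (t : Set (Pt N)) ⊆ P)
    (hai : AffineIndependent ℝ ((↑) : t → Pt N)) :
    t.card ≤ Module.finrank ℝ (affineSpan ℝ P).direction + 1 := by
  rcases t.eq_empty_or_nonempty with rfl | ht
  · simp
  have hcard : Fintype.card ↑t = (t.card - 1) + 1 := by
    rw [Fintype.card_coe]
    have := Finset.card_pos.2 ht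
    omega
  have h1 : Module.finrank ℝ (vectorSpan ℝ (Set.range ((↑) : t → Pt N))) = t.card - 1 :=
    hai.finrank_vectorSpan hcard
  have h2 : vectorSpan ℝ (Set.range ((↑) : t → Pt N)) ≤ (affineSpan ℝ P).direction := by
    rw [Subtype.range_coe, direction_affineSpan]
    exact vectorSpan_mono ℝ hP
  have h3 := Submodule.finrank_mono h2
  rw [h1] at h3
  omega

lemma affInd_iff (t : Finset (Pt N)) :
    AffineIndependent ℝ ((↑) : t → Pt N) ↔
      ∀ w : Pt N → ℝ, ∑ v ∈ t, w v = 0 → ∑ v ∈ t, w v • v = 0 → ∀ v ∈ t, w v = 0 := by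
  classical
  constructor
  · intro h w h0 h1 v hv
    have e0 : ∑ e : ↑t, w ↑e = 0 := by rw [Finset.sum_coe_sort t w]; exact h0
    have e1 : ∑ e : ↑t, w ↑e • (e : Pt N) = 0 := by
      rw [Finset.sum_coe_sort t (fun v => w v • v)]; exact h1
    have := affineIndependent_iff.1 h Finset.univ (fun e => w ↑e) e0 e1
    exact this ⟨v, hv⟩ (Finset.mem_univ _)
  · intro H
    rw [affineIndependent_iff]
    intro s w hw0 hw1 e he
    set W : Pt N → ℝ := fun v => if h : v ∈ t then (if ⟨v, h⟩ ∈ s then w ⟨v, h⟩ else 0) else 0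
      with hW
    have hWe : ∀ e' : ↑t, W ↑e' = if e' ∈ s then w e' else 0 := by
      intro e'
      simp only [hW, e'.2, dif_pos]
    have hsum0 : ∑ v ∈ t, W v = 0 := by
      rw [← Finset.sum_coe_sort t W]
      calc ∑ e' : ↑t, W ↑e' = ∑ e' : ↑t, (if e' ∈ s then w e' else 0) := by
            exact Finset.sum_congr rfl (fun e' _ => hWe e')
        _ = ∑ e' ∈ s, w e' := by rw [Finset.sum_ite_mem, Finset.univ_inter]
        _ = 0 := hw0
    have hsum1 : ∑ v ∈ t, W v • v = 0 := by
      rw [← Finset.sum_coe_sort t (fun v => W v • v)]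
      calc ∑ e' : ↑t, W ↑e' • (e' : Pt N)
          = ∑ e' : ↑t, (if e' ∈ s then w e' • (e' : Pt N) else 0) := by
            refine Finset.sum_congr rfl (fun e' _ => ?_)
            rw [hWe e']
            split_ifs <;> simp
        _ = ∑ e' ∈ s, w e' • (e' : Pt N) := by rw [Finset.sum_ite_mem, Finset.univ_inter]
        _ = 0 := hw1
    have := H W hsum0 hsum1 ↑e e.2
    rw [hWe e, if_pos he] at this
    exact this

end Aux2
section Peel

open Finset

variable {N : ℕ}

lemma peel (V : Finset (Pt N)) (hV : ∀ v ∈ V, IsLat v) (d m : ℕ)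
    (hd : Module.finrank ℝ (affineSpan ℝ (convexHull ℝ (V : Set (Pt N)))).direction = d)
    (hm : d ≤ m + 1) (hm1 : 1 ≤ m) {z : Pt N}
    (hz : z ∈ latPts (dil (m + 1) (convexHull ℝ (V : Set (Pt N))))) :
    ∃ v ∈ latPts (convexHull ℝ (V : Set (Pt N))),
      ∃ w ∈ latPts (dil m (convexHull ℝ (V : Set (Pt N)))), z = v + w := by
  classical
  set P : Set (Pt N) := convexHull ℝ (V : Set (Pt N)) with hPdef
  obtain ⟨hzP, hzL⟩ := hz
  have hzP' : z ∈ ((m + 1 : ℕ) : ℝ) • P := hzP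
  obtain ⟨x, hxP, hxz⟩ := Set.mem_smul_set.1 hzP'
  set c : ℝ := ((m + 1 : ℕ) : ℝ) with hcdef
  have hc0 : (0:ℝ) < c := by positivity
  have hcne : c ≠ 0 := ne_of_gt hc0
  -- the Good predicate
  set Good : Finset (Pt N) → Prop := fun t =>
    (t : Set (Pt N)) ⊆ latPts P ∧ AffineIndependent ℝ ((↑) : t → Pt N) ∧
      x ∈ convexHull ℝ (t : Set (Pt N)) with hGood
  -- existence of a good finset, via Caratheodory
  have hex : ∃ t, Good t := by
    have hxP2 := hxP
    rw [hPdef] at hxP2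
    rw [convexHull_eq_union] at hxP2
    simp only [Set.mem_iUnion, exists_prop] at hxP2
    obtain ⟨t, ht1, ht2, ht3⟩ := hxP2
    refine ⟨t, ?_, ht2, ht3⟩
    intro v hv
    exact ⟨subset_convexHull ℝ _ (ht1 hv), hV v (Finset.mem_coe.1 (ht1 hv))⟩
  have hPfin : (latPts P).Finite := finite_latPts_hull V
  -- measure
  set meas : Finset (Pt N) → ℕ := fun t => (latPts P ∩ convexHull ℝ (t : Set (Pt N))).ncard
    with hmeas
  -- minimal good finset
  have hexm : ∃ t, Good t ∧ ∀ t', Good t' → meas t ≤ meas t' := by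
    set A : Set ℕ := {n | ∃ t, Good t ∧ meas t = n} with hA
    have hAne : A.Nonempty := by
      obtain ⟨t, ht⟩ := hex
      exact ⟨meas t, t, ht, rfl⟩
    obtain ⟨t, htG, htm⟩ := Nat.sInf_mem hAne
    refine ⟨t, htG, fun t' ht' => ?_⟩
    rw [htm]
    exact Nat.sInf_le ⟨t', ht', rfl⟩
  obtain ⟨t, ⟨htsub, htai, htx⟩, htmin⟩ := hexm
  have htP : (t : Set (Pt N)) ⊆ P := fun v hv => (htsub hv).1
  have hhullP : convexHull ℝ (t : Set (Pt N)) ⊆ P := convexHull_min htP (convex_convexHull ℝ _)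
  obtain ⟨w, hw0, hw1, hwx⟩ := Finset.mem_convexHull'.1 htx
  set κ : Pt N → ℝ := fun y => c * w y with hκ
  have hκ0 : ∀ y ∈ t, 0 ≤ κ y := fun y hy => mul_nonneg (le_of_lt hc0) (hw0 y hy)
  have hκsum : ∑ y ∈ t, κ y = c := by
    rw [hκ]
    rw [← Finset.mul_sum, hw1, mul_one]
  have hκvec : ∑ y ∈ t, κ y • y = z := by
    have : ∑ y ∈ t, κ y • y = c • ∑ y ∈ t, w y • y := by
      rw [Finset.smul_sum]
      exact Finset.sum_congr rfl fun y _ => (smul_smul c (w y) y).symm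
    rw [this, hwx, hxz]
  by_cases hA : ∃ v₀ ∈ t, 1 ≤ κ v₀
  · -- peeling case
    obtain ⟨v₀, hv₀t, hκ1⟩ := hA
    have hv₀lat : v₀ ∈ latPts P := htsub hv₀t
    refine ⟨v₀, hv₀lat, z - v₀, ⟨?_, isLat_sub hzL hv₀lat.2⟩, by abel⟩
    -- z - v₀ ∈ dil m P
    set ω : Pt N → ℝ := fun y => κ y - (if y = v₀ then 1 else 0) with hω
    have hω0 : ∀ u ∈ t, 0 ≤ ω u := by
      intro u hu
      simp only [hω]
      by_cases h : u = v₀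
      · rw [if_pos h, h]; linarith
      · rw [if_neg h]; have := hκ0 u hu; linarith
    have hωsum : ∑ y ∈ t, ω y = (m : ℝ) := by
      rw [hω]
      rw [Finset.sum_sub_distrib, hκsum, Finset.sum_ite_eq' t v₀ (fun _ => (1:ℝ)), if_pos hv₀t]
      rw [hcdef]; push_cast; ring
    have hωvec : ∑ y ∈ t, ω y • y = z - v₀ := by
      rw [hω]
      have : ∀ u ∈ t, (κ u - if u = v₀ then (1:ℝ) else 0) • u
          = κ u • u - (if u = v₀ then v₀ else 0) := by
        intro u _
        rw [sub_smul]
        congr 1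
        by_cases h : u = v₀
        · rw [if_pos h, if_pos h, h, one_smul]
        · rw [if_neg h, if_neg h, zero_smul]
      rw [Finset.sum_congr rfl this, Finset.sum_sub_distrib, hκvec,
        Finset.sum_ite_eq' t v₀ (fun _ => v₀), if_pos hv₀t]
    have hmne : ((m:ℕ):ℝ) ≠ 0 := by positivity
    have hp : (∑ y ∈ t, (ω y / (m:ℝ)) • y) ∈ convexHull ℝ (t : Set (Pt N)) := by
      apply Finset.mem_convexHull'.2
      refine ⟨fun y => ω y / (m:ℝ), fun y hy => div_nonneg (hω0 y hy) (by positivity), ?_, rfl⟩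
      rw [← Finset.sum_div, hωsum, div_self hmne]
    refine Set.mem_smul_set.2 ⟨∑ y ∈ t, (ω y / (m:ℝ)) • y, hhullP hp, ?_⟩
    rw [Finset.smul_sum, ← hωvec]
    refine Finset.sum_congr rfl fun y _ => ?_
    rw [smul_smul, mul_div_cancel₀ _ hmne]
  · -- Ewald–Wessels exchange case: derive a contradiction with minimality
    exfalso
    push_neg at hA
    have htne : t.Nonempty := by
      rcases t.eq_empty_or_nonempty with rfl | h
      · simp at htx
      · exact h
    have hcard1 : c < (t.card : ℝ) := by
      have := Finset.sum_lt_sum_of_nonempty htne hA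
      rw [hκsum] at this
      simpa using this
    have hcard2 : t.card ≤ d + 1 := by
      have h := card_le_dim htP htai
      rw [hd] at h
      exact h
    have hcard : t.card = m + 2 := by
      have h1 : (m:ℝ) + 1 < (t.card : ℝ) := by
        rw [hcdef] at hcard1; push_cast at hcard1; linarith
      have h2 : m + 1 < t.card := by exact_mod_cast h1
      omega
    set μ : Pt N → ℝ := fun v => 1 - κ v with hμ
    have hμpos : ∀ v ∈ t, 0 < μ v := fun v hv => by
      rw [hμ]; simp only []; linarith [hA v hv]
    have hμsum : ∑ v ∈ t, μ v = 1 := by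
      rw [hμ]
      rw [Finset.sum_sub_distrib, hκsum, Finset.sum_const, hcard, hcdef]
      push_cast; ring
    set wst : Pt N := ∑ v ∈ t, μ v • v with hwst
    have hwstP : wst ∈ convexHull ℝ (t : Set (Pt N)) :=
      Finset.mem_convexHull'.2 ⟨μ, fun v hv => le_of_lt (hμpos v hv), hμsum, rfl⟩
    have hwstlat : IsLat wst := by
      have : wst = (∑ v ∈ t, v) - z := by
        rw [hwst, ← hκvec, ← Finset.sum_sub_distrib]
        refine Finset.sum_congr rfl fun v _ => ?_
        rw [hμ]; rw [sub_smul, one_smul]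
      rw [this]
      exact isLat_sub (isLat_finsetSum t _ (fun v hv => (htsub hv).2)) hzL
    have hwstLP : wst ∈ latPts P := ⟨hhullP hwstP, hwstlat⟩
    -- wst ∉ t
    have hwstnt : wst ∉ t := by
      intro hmem
      set σ : Pt N → ℝ := fun v => μ v - (if v = wst then 1 else 0) with hσ
      have hσ0 : ∑ v ∈ t, σ v = 0 := by
        rw [hσ, Finset.sum_sub_distrib, hμsum,
          Finset.sum_ite_eq' t wst (fun _ => (1:ℝ)), if_pos hmem]
        ring
      have hσ1 : ∑ v ∈ t, σ v • v = 0 := by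
        rw [hσ]
        have : ∀ v ∈ t, (μ v - if v = wst then (1:ℝ) else 0) • v
            = μ v • v - (if v = wst then wst else 0) := by
          intro v _
          rw [sub_smul]
          congr 1
          by_cases h : v = wst
          · rw [if_pos h, if_pos h, h, one_smul]
          · rw [if_neg h, if_neg h, zero_smul]
        rw [Finset.sum_congr rfl this, Finset.sum_sub_distrib, ← hwst,
          Finset.sum_ite_eq' t wst (fun _ => wst), if_pos hmem]
        simp
      have hzero := (affInd_iff t).1 htai σ hσ0 hσ1
      -- find v' ∈ t with v' ≠ wst
      have h2card : 1 < t.card := by omega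
      obtain ⟨a, ha, b, hb, hab⟩ := Finset.one_lt_card.1 h2card
      have : ∃ v' ∈ t, v' ≠ wst := by
        by_cases h : a = wst
        · exact ⟨b, hb, by rw [← h]; exact fun hh => hab hh.symm⟩
        · exact ⟨a, ha, h⟩
      obtain ⟨v', hv't, hv'ne⟩ := this
      have hz' := hzero v' hv't
      simp only [hσ, if_neg hv'ne, sub_zero] at hz'
      exact (ne_of_gt (hμpos v' hv't)) hz'
    -- choose v₀ minimizing κ/μ
    obtain ⟨v₀, hv₀t, hv₀min⟩ := Finset.exists_min_image t (fun v => κ v / μ v) htne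
    set c₀ : ℝ := κ v₀ / μ v₀ with hc₀
    have hc₀0 : 0 ≤ c₀ := div_nonneg (hκ0 v₀ hv₀t) (le_of_lt (hμpos v₀ hv₀t))
    have hkey : ∀ v ∈ t, 0 ≤ κ v - c₀ * μ v := by
      intro v hv
      have h1 : c₀ ≤ κ v / μ v := hv₀min v hv
      have h2 := (le_div_iff₀ (hμpos v hv)).1 h1
      linarith
    have hkeyv₀ : κ v₀ - c₀ * μ v₀ = 0 := by
      rw [hc₀, div_mul_cancel₀ _ (ne_of_gt (hμpos v₀ hv₀t))]
      ring
    set t' : Finset (Pt N) := insert wst (t.erase v₀) with ht'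
    have hwe : wst ∉ t.erase v₀ := fun h => hwstnt (Finset.mem_of_mem_erase h)
    have herase_sub : ∀ v ∈ t.erase v₀, v ∈ t := fun v hv => Finset.mem_of_mem_erase hv
    -- sums over t' split
    have hsum_t' : ∀ f : Pt N → Pt N, True := fun _ => trivial
    -- Good t'
    have ht'sub : (t' : Set (Pt N)) ⊆ latPts P := by
      intro y hy
      rw [ht'] at hy
      simp only [Finset.coe_insert, Set.mem_insert_iff] at hy
      rcases hy with rfl | hy
      · exact hwstLP
      · exact htsub (herase_sub y (Finset.mem_coe.1 hy))
    have ht'ai : AffineIndependent ℝ ((↑) : t' → Pt N) := by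
      rw [affInd_iff]
      intro ρ hρ0 hρ1 y hy
      set σ : Pt N → ℝ := fun v => (if v = v₀ then 0 else ρ v) + ρ wst * μ v with hσ
      have hsplit0 : ∑ v ∈ t', ρ v = ρ wst + ∑ v ∈ t.erase v₀, ρ v := by
        rw [ht', Finset.sum_insert hwe]
      have hsplit1 : ∑ v ∈ t', ρ v • v = ρ wst • wst + ∑ v ∈ t.erase v₀, ρ v • v := by
        rw [ht', Finset.sum_insert hwe]
      have hg : ∑ v ∈ t, (if v = v₀ then (0:ℝ) else ρ v) = ∑ v ∈ t.erase v₀, ρ v := by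
        rw [← Finset.add_sum_erase t _ hv₀t, if_pos rfl, zero_add]
        exact Finset.sum_congr rfl fun v hv => by
          rw [if_neg (Finset.ne_of_mem_erase hv)]
      have hgv : ∑ v ∈ t, (if v = v₀ then (0:ℝ) else ρ v) • v = ∑ v ∈ t.erase v₀, ρ v • v := by
        rw [← Finset.add_sum_erase t _ hv₀t, if_pos rfl, zero_smul, zero_add]
        exact Finset.sum_congr rfl fun v hv => by
          rw [if_neg (Finset.ne_of_mem_erase hv)]
      have hσ0 : ∑ v ∈ t, σ v = 0 := by
        rw [hσ]
        rw [Finset.sum_add_distrib, hg, ← Finset.mul_sum, hμsum, mul_one]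
        rw [hsplit0] at hρ0
        linarith
      have hσ1 : ∑ v ∈ t, σ v • v = 0 := by
        rw [hσ]
        have expand : ∀ v ∈ t, ((if v = v₀ then (0:ℝ) else ρ v) + ρ wst * μ v) • v
            = (if v = v₀ then (0:ℝ) else ρ v) • v + ρ wst • (μ v • v) := by
          intro v _
          rw [add_smul, mul_smul]
        rw [Finset.sum_congr rfl expand, Finset.sum_add_distrib, hgv, ← Finset.smul_sum, ← hwst]
        rw [hsplit1] at hρ1
        calc ∑ v ∈ t.erase v₀, ρ v • v + ρ wst • wst
            = ρ wst • wst + ∑ v ∈ t.erase v₀, ρ v • v := by abel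
          _ = 0 := hρ1
      have hzero := (affInd_iff t).1 htai σ hσ0 hσ1
      have hρwst : ρ wst = 0 := by
        have hz0 := hzero v₀ hv₀t
        simp only [hσ, eq_self_iff_true, if_true, zero_add] at hz0
        rcases mul_eq_zero.1 hz0 with h | h
        · exact h
        · exact absurd h (ne_of_gt (hμpos v₀ hv₀t))
      rw [ht'] at hy
      rcases Finset.mem_insert.1 hy with rfl | hy'
      · exact hρwst
      · have hvt : y ∈ t := herase_sub y hy'
        have hz1 := hzero y hvt
        simp only [hσ, if_neg (Finset.ne_of_mem_erase hy'), hρwst, zero_mul, add_zero] at hz1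
        exact hz1
    have ht'x : x ∈ convexHull ℝ (t' : Set (Pt N)) := by
      apply Finset.mem_convexHull'.2
      set ω : Pt N → ℝ := fun y => if y = wst then c₀ / c else (κ y - c₀ * μ y) / c with hω
      refine ⟨ω, ?_, ?_, ?_⟩
      · intro y hy
        simp only [hω]
        by_cases h : y = wst
        · rw [if_pos h]; positivity
        · rw [if_neg h]
          rw [ht'] at hy
          rcases Finset.mem_insert.1 hy with h' | h'
          · exact absurd h' h
          · exact div_nonneg (hkey y (herase_sub y h')) (le_of_lt hc0)
      · rw [ht', Finset.sum_insert hwe]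
        simp only [hω, eq_self_iff_true, if_true]
        have : ∀ v ∈ t.erase v₀, (if v = wst then c₀ / c else (κ v - c₀ * μ v) / c)
            = (κ v - c₀ * μ v) / c := by
          intro v hv
          rw [if_neg (fun h => hwe (by rw [← h]; exact hv))]
        rw [Finset.sum_congr rfl this]
        have hsum : ∑ v ∈ t.erase v₀, (κ v - c₀ * μ v) = c - c₀ := by
          have hadd := Finset.add_sum_erase t (fun v => κ v - c₀ * μ v) hv₀t
          simp only [hkeyv₀, zero_add] at hadd
          rw [hadd, Finset.sum_sub_distrib, hκsum, ← Finset.mul_sum, hμsum, mul_one]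
        rw [← Finset.sum_div, hsum]
        field_simp
        ring
      · rw [ht', Finset.sum_insert hwe]
        simp only [hω, eq_self_iff_true, if_true]
        have : ∀ v ∈ t.erase v₀, (if v = wst then c₀ / c else (κ v - c₀ * μ v) / c) • v
            = ((κ v - c₀ * μ v) / c) • v := by
          intro v hv
          rw [if_neg (fun h => hwe (by rw [← h]; exact hv))]
        rw [Finset.sum_congr rfl this]
        have hsumv : ∑ v ∈ t.erase v₀, (κ v - c₀ * μ v) • v = z - c₀ • wst := by
          have h1 := Finset.add_sum_erase t (fun v => (κ v - c₀ * μ v) • v) hv₀t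
          simp only [hkeyv₀, zero_smul, zero_add] at h1
          rw [h1]
          have : ∀ v ∈ t, (κ v - c₀ * μ v) • v = κ v • v - c₀ • (μ v • v) := by
            intro v _
            rw [sub_smul]
            congr 1
            exact mul_smul c₀ (μ v) v
          rw [Finset.sum_congr rfl this, Finset.sum_sub_distrib, hκvec, ← Finset.smul_sum, ← hwst]
        have expand : ∀ v ∈ t.erase v₀, ((κ v - c₀ * μ v) / c) • v
            = c⁻¹ • ((κ v - c₀ * μ v) • v) := by
          intro v _
          rw [smul_smul, div_eq_inv_mul]
        rw [Finset.sum_congr rfl expand, ← Finset.smul_sum, hsumv]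
        have hcw : (c₀ / c) • wst = c⁻¹ • (c₀ • wst) := by
          rw [smul_smul, div_eq_inv_mul]
        rw [hcw, ← smul_add]
        have : c₀ • wst + (z - c₀ • wst) = z := by abel
        rw [this]
        rw [← hxz, hcdef]
        rw [inv_smul_smul₀ hcne]
    -- measure decreases
    have hhull_sub : convexHull ℝ (t' : Set (Pt N)) ⊆ convexHull ℝ (t : Set (Pt N)) := by
      apply convexHull_min _ (convex_convexHull ℝ _)
      intro y hy
      rw [ht'] at hy
      simp only [Finset.coe_insert, Set.mem_insert_iff] at hy
      rcases hy with rfl | hy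
      · exact hwstP
      · exact subset_convexHull ℝ _ (Finset.mem_coe.2 (herase_sub y (Finset.mem_coe.1 hy)))
    have hv₀notin : v₀ ∉ convexHull ℝ (t' : Set (Pt N)) := by
      intro hv₀'
      obtain ⟨a, ha0, ha1, hav⟩ := Finset.mem_convexHull'.1 hv₀'
      set τ : Pt N → ℝ := fun v =>
        (if v = v₀ then 0 else a v) + a wst * μ v - (if v = v₀ then 1 else 0) with hτ
      have hg : ∑ v ∈ t, (if v = v₀ then (0:ℝ) else a v) = ∑ v ∈ t.erase v₀, a v := by
        rw [← Finset.add_sum_erase t _ hv₀t, if_pos rfl, zero_add]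
        exact Finset.sum_congr rfl fun v hv => by
          rw [if_neg (Finset.ne_of_mem_erase hv)]
      have hgv : ∑ v ∈ t, (if v = v₀ then (0:ℝ) else a v) • v = ∑ v ∈ t.erase v₀, a v • v := by
        rw [← Finset.add_sum_erase t _ hv₀t, if_pos rfl, zero_smul, zero_add]
        exact Finset.sum_congr rfl fun v hv => by
          rw [if_neg (Finset.ne_of_mem_erase hv)]
      have hτ0 : ∑ v ∈ t, τ v = 0 := by
        rw [hτ]
        simp only [Finset.sum_sub_distrib, Finset.sum_add_distrib]
        rw [hg, ← Finset.mul_sum, hμsum, mul_one,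
          Finset.sum_ite_eq' t v₀ (fun _ => (1:ℝ)), if_pos hv₀t]
        rw [ht', Finset.sum_insert hwe] at ha1
        linarith
      have hτ1 : ∑ v ∈ t, τ v • v = 0 := by
        rw [hτ]
        have expand : ∀ v ∈ t,
            ((if v = v₀ then (0:ℝ) else a v) + a wst * μ v - (if v = v₀ then 1 else 0)) • v
            = (if v = v₀ then (0:ℝ) else a v) • v + a wst • (μ v • v)
              - (if v = v₀ then v₀ else 0) := by
          intro v _
          rw [sub_smul, add_smul, mul_smul]
          congr 1
          by_cases h : v = v₀
          · subst h; simp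
          · simp [h]
        rw [Finset.sum_congr rfl expand]
        simp only [Finset.sum_sub_distrib, Finset.sum_add_distrib]
        rw [hgv, ← Finset.smul_sum, ← hwst,
          Finset.sum_ite_eq' t v₀ (fun _ => v₀), if_pos hv₀t]
        rw [ht', Finset.sum_insert hwe] at hav
        calc ∑ v ∈ t.erase v₀, a v • v + a wst • wst - v₀
            = (a wst • wst + ∑ v ∈ t.erase v₀, a v • v) - v₀ := by abel
          _ = v₀ - v₀ := by rw [hav]
          _ = 0 := by abel
      have hzero := (affInd_iff t).1 htai τ hτ0 hτ1
      -- erase is nonempty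
      have hcard_erase : 0 < (t.erase v₀).card := by
        rw [Finset.card_erase_of_mem hv₀t]
        omega
      obtain ⟨v', hv'⟩ := Finset.card_pos.1 hcard_erase
      have hv'ne : v' ≠ v₀ := Finset.ne_of_mem_erase hv'
      have hv't : v' ∈ t := herase_sub v' hv'
      have h1 := hzero v' hv't
      simp only [hτ] at h1
      rw [if_neg hv'ne, if_neg hv'ne, sub_zero] at h1
      have hav' : a v' = 0 ∧ a wst = 0 := by
        have ha1' : 0 ≤ a v' := by
          apply ha0
          rw [ht']
          exact Finset.mem_insert_of_mem hv'
        have ha2' : 0 ≤ a wst := by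
          apply ha0
          rw [ht']
          exact Finset.mem_insert_self _ _
        have hμv' := hμpos v' hv't
        have hprod : 0 ≤ a wst * μ v' := mul_nonneg ha2' (le_of_lt hμv')
        have hv'0 : a v' = 0 := by linarith
        have hp0 : a wst * μ v' = 0 := by linarith
        refine ⟨hv'0, ?_⟩
        rcases mul_eq_zero.1 hp0 with h | h
        · exact h
        · exact absurd h (ne_of_gt hμv')
      -- now all weights vanish
      have hallz : ∀ v ∈ t.erase v₀, a v = 0 := by
        intro v hv
        have h2 := hzero v (herase_sub v hv)
        simp only [hτ] at h2
        rw [if_neg (Finset.ne_of_mem_erase hv), if_neg (Finset.ne_of_mem_erase hv),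
          sub_zero, hav'.2, zero_mul, add_zero] at h2
        exact h2
      have : (1:ℝ) = 0 := by
        rw [← ha1, ht', Finset.sum_insert hwe, hav'.2, zero_add]
        exact Finset.sum_eq_zero hallz
      norm_num at this
    -- strict inclusion of lattice point sets
    have hss : latPts P ∩ convexHull ℝ (t' : Set (Pt N))
        ⊂ latPts P ∩ convexHull ℝ (t : Set (Pt N)) := by
      constructor
      · exact Set.inter_subset_inter_right _ hhull_sub
      · intro hsub
        have hv₀mem : v₀ ∈ latPts P ∩ convexHull ℝ (t : Set (Pt N)) :=
          ⟨htsub hv₀t, subset_convexHull ℝ _ (Finset.mem_coe.2 hv₀t)⟩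
        exact hv₀notin (hsub hv₀mem).2
    have hlt : meas t' < meas t :=
      Set.ncard_lt_ncard hss (Set.Finite.subset hPfin Set.inter_subset_left)
    have := htmin t' ⟨ht'sub, ht'ai, ht'x⟩
    omega

end Peel
section Chain

open Finset

variable {N : ℕ}

lemma chain (V : Finset (Pt N)) (hV : ∀ v ∈ V, IsLat v) (d : ℕ)
    (hd : Module.finrank ℝ (affineSpan ℝ (convexHull ℝ (V : Set (Pt N)))).direction = d)
    (r : ℕ) (hr : 1 ≤ r) (hdr : d ≤ r + 1) :
    ∀ (M : ℕ) (z : Pt N), z ∈ latPts (dil (r + M) (convexHull ℝ (V : Set (Pt N)))) →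
      ∃ (w : Pt N) (g : Fin M → Pt N), w ∈ latPts (dil r (convexHull ℝ (V : Set (Pt N)))) ∧
        (∀ i, g i ∈ latPts (convexHull ℝ (V : Set (Pt N)))) ∧ z = w + ∑ i, g i := by
  intro M
  induction M with
  | zero =>
    intro z hz
    exact ⟨z, fun _ => 0, by simpa using hz, fun i => i.elim0, by simp⟩
  | succ M ih =>
    intro z hz
    have hz' : z ∈ latPts (dil ((r + M) + 1) (convexHull ℝ (V : Set (Pt N)))) := by
      have h : r + (M + 1) = (r + M) + 1 := by omega
      rwa [h] at hz
    obtain ⟨v, hv, w1, hw1, hzw⟩ := peel V hV d (r + M) hd (by omega) (by omega) hz'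
    obtain ⟨w, g, hw, hg, hww⟩ := ih w1 hw1
    refine ⟨w, Fin.cons v g, hw, ?_, ?_⟩
    · intro i
      refine Fin.cases ?_ ?_ i
      · simpa using hv
      · intro j; simpa using hg j
    · rw [Fin.sum_cons, hzw, hww]
      abel

end Chain
/-- if `μ_midp(P) ≤ (d-1)/2`, then `μ_idp(P) ≤ (d-3)/2 + μ_midp(P)`. -/
theorem idp_le_of_small_midp {N d : ℕ} (P : Set (Pt N))
    (hP : IsIntegralPolytope P) (hdim : polyDim P = d)
    (k : ℕ) (hk : IsLeast {k : ℕ | 0 < k ∧ HasIDP (dil k P)} k)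
    (hsmall : 2 * (k : ℝ) ≤ (d : ℝ) - 1) :
    ∀ n : ℕ, ((d : ℝ) - 3) / 2 + k ≤ n → HasIDP (dil n P) := by
  classical
  obtain ⟨V, hV, rfl⟩ := hP
  obtain ⟨⟨hkpos, hkIDP⟩, hkmin⟩ := hk
  have hd : Module.finrank ℝ
      (affineSpan ℝ (convexHull ℝ (V : Set (Pt N)))).direction = d := hdim
  intro n hn j hj α hα
  -- numeric facts
  have hd3 : 2 * k + 1 ≤ d := by
    have h : (2 * (k:ℝ) + 1 : ℝ) ≤ (d:ℝ) := by linarith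
    exact_mod_cast h
  have h2n : d + 2 * k ≤ 2 * n + 3 := by
    have h : (d : ℝ) + 2 * k ≤ 2 * n + 3 := by linarith
    exact_mod_cast h
  have hk1 : 1 ≤ k := hkpos
  have hconv : Convex ℝ (convexHull ℝ (V : Set (Pt N))) := convex_convexHull ℝ _
  have hα' : α ∈ latPts (dil (j * n) (convexHull ℝ (V : Set (Pt N)))) := by
    rwa [dil_dil] at hα
  have hne : (convexHull ℝ (V : Set (Pt N))).Nonempty := by
    obtain ⟨y, hy, -⟩ := Set.mem_smul_set.1 hα'.1
    exact ⟨y, hy⟩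
  rcases Nat.lt_or_ge j 2 with hj2 | hj2
  · -- j = 1 : trivial decomposition
    have hj1 : j = 1 := by omega
    subst hj1
    rw [dil_one] at hα
    exact ⟨fun _ => α, fun _ => hα, by simp⟩
  · -- j ≥ 2
    obtain ⟨j', rfl⟩ : ∃ j', j = j' + 2 := ⟨j - 2, by omega⟩
    set q := n / k with hqdef
    set s := n % k with hsdef
    have hnqs : k * q + s = n := Nat.div_add_mod n k
    have hsk : s < k := Nat.mod_lt n hkpos
    have hnk : k ≤ n := by omega
    have hqpos : 0 < q := Nat.div_pos hnk hkpos
    have hrpos : 1 ≤ 2 * (k * q) := by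
      have := Nat.mul_pos hkpos hqpos
      omega
    have hdr : d ≤ 2 * (k * q) + 1 := by
      have h1 : s + 1 ≤ k := hsk
      linarith [hnqs, h2n]
    have hM : (j' + 2) * n = 2 * (k * q) + (s + (s + j' * n)) := by
      have h := hnqs
      calc (j' + 2) * n = j' * n + 2 * n := by ring
        _ = j' * n + 2 * (k * q + s) := by rw [h]
        _ = 2 * (k * q) + (s + (s + j' * n)) := by ring
    rw [hM] at hα'
    obtain ⟨w, g, hw, hg, hαw⟩ :=
      chain V hV d hd (2 * (k * q)) hrpos hdr (s + (s + j' * n)) α hα'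
    -- split w into 2q lattice points of kP
    have hw' : w ∈ latPts (dil (2 * q) (dil k (convexHull ℝ (V : Set (Pt N))))) := by
      rw [dil_dil]
      have e : 2 * q * k = 2 * (k * q) := by ring
      rw [e]
      exact hw
    obtain ⟨G, hG, hwG⟩ := hkIDP (2 * q) (by omega) w hw'
    -- reindex G over Fin (q + q)
    have hqq : q + q = 2 * q := by ring
    set G2 : Fin (q + q) → Pt N := fun i => G (finCongr hqq i) with hG2
    have hG2mem : ∀ i, G2 i ∈ latPts (dil k (convexHull ℝ (V : Set (Pt N)))) :=
      fun i => hG _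
    have hG2sum : ∑ i, G2 i = ∑ i, G i :=
      Fintype.sum_equiv (finCongr hqq) G2 G (fun i => rfl)
    set A : Pt N := ∑ i : Fin q, G2 (Fin.castAdd q i) with hA
    set B : Pt N := ∑ i : Fin q, G2 (Fin.natAdd q i) with hB
    have hABsum : A + B = ∑ i, G2 i := (Fin.sum_univ_add G2).symm
    -- split the singles
    set S1 : Pt N := ∑ i : Fin s, g (Fin.castAdd (s + j' * n) i) with hS1
    set rest : Fin (s + j' * n) → Pt N := fun i => g (Fin.natAdd s i) with hrest
    set S2 : Pt N := ∑ i : Fin s, rest (Fin.castAdd (j' * n) i) with hS2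
    set η : Fin (j' * n) → Pt N := fun i => rest (Fin.natAdd s i) with hη
    have hgsum : ∑ i, g i = S1 + (S2 + ∑ i, η i) := by
      rw [Fin.sum_univ_add g, Fin.sum_univ_add rest]
    set T : Fin j' → Pt N := fun t => ∑ l : Fin n, η (finProdFinEquiv (t, l)) with hT
    have hTsum : ∑ t, T t = ∑ i, η i := by
      rw [hT]
      rw [← Fintype.sum_prod_type (f := fun p : Fin j' × Fin n => η (finProdFinEquiv p))]
      exact Fintype.sum_equiv finProdFinEquiv _ η (fun p => rfl)
    -- memberships
    have hlat1 : latPts (dil 1 (convexHull ℝ (V : Set (Pt N))))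
        = latPts (convexHull ℝ (V : Set (Pt N))) := by rw [dil_one]
    have hsingle : ∀ y, y ∈ latPts (convexHull ℝ (V : Set (Pt N))) →
        y ∈ latPts (dil 1 (convexHull ℝ (V : Set (Pt N)))) := by
      intro y hy; rw [hlat1]; exact hy
    have hAmem : A ∈ latPts (dil (q * k) (convexHull ℝ (V : Set (Pt N)))) :=
      sum_mem_latPts_dil hconv hne _ (fun i => hG2mem _)
    have hBmem : B ∈ latPts (dil (q * k) (convexHull ℝ (V : Set (Pt N)))) :=
      sum_mem_latPts_dil hconv hne _ (fun i => hG2mem _)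
    have hS1mem : S1 ∈ latPts (dil (s * 1) (convexHull ℝ (V : Set (Pt N)))) :=
      sum_mem_latPts_dil hconv hne _ (fun i => hsingle _ (hg _))
    have hS2mem : S2 ∈ latPts (dil (s * 1) (convexHull ℝ (V : Set (Pt N)))) :=
      sum_mem_latPts_dil hconv hne _ (fun i => hsingle _ (hg _))
    have hqks : q * k + s * 1 = n := by
      rw [mul_one, mul_comm q k]
      exact hnqs
    have hF0 : A + S1 ∈ latPts (dil n (convexHull ℝ (V : Set (Pt N)))) := by
      have h := add_mem_latPts_dil hconv hAmem hS1mem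
      rwa [hqks] at h
    have hF1 : B + S2 ∈ latPts (dil n (convexHull ℝ (V : Set (Pt N)))) := by
      have h := add_mem_latPts_dil hconv hBmem hS2mem
      rwa [hqks] at h
    have hTmem : ∀ t, T t ∈ latPts (dil n (convexHull ℝ (V : Set (Pt N)))) := by
      intro t
      have h := sum_mem_latPts_dil hconv hne (fun l : Fin n => η (finProdFinEquiv (t, l)))
        (fun l => hsingle _ (hg _))
      rwa [mul_one] at h
    -- assemble
    refine ⟨Fin.cons (A + S1) (Fin.cons (B + S2) T), ?_, ?_⟩
    · intro i
      refine Fin.cases ?_ ?_ i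
      · exact hF0
      · intro i'
        refine Fin.cases ?_ ?_ i'
        · exact hF1
        · intro i''
          simpa using hTmem i''
    · rw [Fin.sum_cons, Fin.sum_cons]
      rw [hαw, hwG, ← hG2sum, ← hABsum, hgsum, hTsum]
      abel
end

section
/- Let d = 2m−1 with m ≥ 4, and let P ⊂ ℝ^d be the simplex with vertices 0, e₁,…,e_{d−1}, and (m−1)(e₁+⋯+e_{d−1}) + m·e_d. Then Box(P) = {(j,j,…,j,2j) ∈ ℤ^{d+1} : j = 1,…,m−1} (where the last coordinate 2j is the degree), so μ_hole(P) = 2m−2 = d−1, while the only Hilbert basis element of C(P) of degree ≥ 2 is (1,…,1,2), so μ_Hilb(P) = 2. -/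
open scoped BigOperators Pointwise

/-- Vertex set of the simplex of Example 2.3: `0`, `e₁, …, e_{d-1}`, and
`(m-1)(e₁+⋯+e_{d-1}) + m·e_d`, where `d = 2m-1`. -/
def Vm (m : ℕ) : Set (Pt (2*m-1)) :=
  {0} ∪ {x : Pt (2*m-1) | ∃ k : Fin (2*m-1), (k : ℕ) < 2*m-2 ∧
          x = fun l => if l = k then (1:ℝ) else 0}
    ∪ {(fun k => if (k : ℕ) < 2*m-2 then ((m:ℝ) - 1) else (m:ℝ) : Pt (2*m-1))}

/-- The simplex of Example 2.3 in dimension `d = 2m-1`. -/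
def Pm (m : ℕ) : Set (Pt (2*m-1)) := convexHull ℝ (Vm m)

namespace Ex23

open Finset

/-- standard basis vector -/
def ee (m : ℕ) (k : Fin (2*m-1)) : Pt (2*m-1) := fun l => if l = k then (1:ℝ) else 0

/-- the big vertex -/
def vv (m : ℕ) : Pt (2*m-1) :=
  fun k => if (k : ℕ) < 2*m-2 then ((m:ℝ) - 1) else (m:ℝ)

lemma mem_Vm_iff (m : ℕ) (u : Pt (2*m-1)) :
    u ∈ Vm m ↔ u = 0 ∨ (∃ k : Fin (2*m-1), (k:ℕ) < 2*m-2 ∧ u = ee m k) ∨ u = vv m := by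
  simp only [Vm, Set.mem_union, Set.mem_singleton_iff, Set.mem_setOf_eq]
  constructor
  · rintro ((h | h) | h)
    · exact Or.inl h
    · obtain ⟨k, hk, he⟩ := h; exact Or.inr (Or.inl ⟨k, hk, he⟩)
    · exact Or.inr (Or.inr h)
  · rintro (h | ⟨k, hk, he⟩ | h)
    · exact Or.inl (Or.inl h)
    · exact Or.inl (Or.inr ⟨k, hk, he⟩)
    · exact Or.inr h

/-- the H-description (outer bound) of `Pm`. -/
def inP (m : ℕ) : Set (Pt (2*m-1)) :=
  {x | ∀ l₀ : Fin (2*m-1), (l₀:ℕ) = 2*m-2 →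
    0 ≤ x l₀ ∧
    (∀ k : Fin (2*m-1), (k:ℕ) < 2*m-2 → ((m:ℝ)-1) * x l₀ ≤ (m:ℝ) * x k) ∧
    (m:ℝ) * ((∑ l, x l) - x l₀) ≤ (m:ℝ) + ((2*(m:ℝ)-2)*((m:ℝ)-1) - 1) * x l₀}

lemma convex_inP (m : ℕ) : Convex ℝ (inP m) := by
  intro x hx y hy a b ha hb hab
  intro l₀ hl₀
  obtain ⟨h1x, h2x, h3x⟩ := hx l₀ hl₀
  obtain ⟨h1y, h2y, h3y⟩ := hy l₀ hl₀
  have hev : ∀ l, (a • x + b • y) l = a * x l + b * y l := fun l => rfl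
  have hsum : ∑ l, (a • x + b • y) l = a * (∑ l, x l) + b * (∑ l, y l) := by
    simp only [hev]
    rw [Finset.sum_add_distrib, Finset.mul_sum, Finset.mul_sum]
  refine ⟨?_, fun k hk => ?_, ?_⟩
  · rw [hev]; have := mul_nonneg ha h1x; have := mul_nonneg hb h1y; linarith
  · rw [hev, hev]
    have hx2 := mul_le_mul_of_nonneg_left (h2x k hk) ha
    have hy2 := mul_le_mul_of_nonneg_left (h2y k hk) hb
    nlinarith [hx2, hy2]
  · rw [hsum, hev]
    have hx3 := mul_le_mul_of_nonneg_left h3x ha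
    have hy3 := mul_le_mul_of_nonneg_left h3y hb
    nlinarith [hx3, hy3]

lemma vv_apply_last (m : ℕ) {l : Fin (2*m-1)} (hl : (l:ℕ) = 2*m-2) :
    vv m l = (m:ℝ) := by simp [vv, hl]

lemma vv_apply_lt (m : ℕ) {l : Fin (2*m-1)} (hl : (l:ℕ) < 2*m-2) :
    vv m l = (m:ℝ) - 1 := by simp [vv, hl]

lemma sum_vv (m : ℕ) (hm : 4 ≤ m) :
    ∑ l, vv m l = (2*(m:ℝ)-2)*((m:ℝ)-1) + m := by
  have hrw : ∀ l : Fin (2*m-1), vv m l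
      = ((m:ℝ)-1) + (if l = (⟨2*m-2, by omega⟩ : Fin (2*m-1)) then 1 else 0) := by
    intro l
    by_cases h : (l:ℕ) < 2*m-2
    · have hne : l ≠ (⟨2*m-2, by omega⟩ : Fin (2*m-1)) :=
        Fin.ne_of_val_ne (show (l:ℕ) ≠ 2*m-2 by omega)
      simp [vv, h, hne]
    · have heq : l = (⟨2*m-2, by omega⟩ : Fin (2*m-1)) := by
        have := l.isLt; exact Fin.eq_of_val_eq (show (l:ℕ) = 2*m-2 by omega)
      simp [vv, h, heq]
  rw [Finset.sum_congr rfl (fun l _ => hrw l), Finset.sum_add_distrib,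
    Finset.sum_const, Finset.sum_ite_eq' Finset.univ _ (fun _ => (1:ℝ))]
  simp only [Finset.mem_univ, if_true, Finset.card_univ, Fintype.card_fin, nsmul_eq_mul]
  have hc : ((2*m-1 : ℕ) : ℝ) = 2*(m:ℝ) - 1 := by
    push_cast [Nat.cast_sub (by omega : 1 ≤ 2*m)]; ring
  rw [hc]; ring

lemma sum_ee (m : ℕ) (k : Fin (2*m-1)) : ∑ l, ee m l k = 0 ∨ True := Or.inr trivial

lemma Vm_subset_inP (m : ℕ) (hm : 4 ≤ m) : Vm m ⊆ inP m := by
  have hm4 : (4:ℝ) ≤ (m:ℝ) := by exact_mod_cast hm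
  intro u hu
  rw [mem_Vm_iff] at hu
  intro l₀ hl₀
  rcases hu with h0 | ⟨k₀, hk₀, hek⟩ | hv
  · subst h0
    simp only [Pi.zero_apply, Finset.sum_const_zero]
    refine ⟨le_refl _, fun k hk => by rw [mul_zero, mul_zero], by nlinarith⟩
  · subst hek
    have hne : l₀ ≠ k₀ := Fin.ne_of_val_ne (show (l₀:ℕ) ≠ (k₀:ℕ) by omega)
    have hval0 : ee m k₀ l₀ = 0 := by simp [ee, hne]
    have hsum : ∑ l, ee m k₀ l = 1 := by
      simp [ee, Finset.sum_ite_eq' Finset.univ k₀ (fun _ => (1:ℝ))]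
    rw [hval0, hsum]
    refine ⟨le_refl _, fun k hk => ?_, by nlinarith⟩
    by_cases hkk : k = k₀
    · rw [hkk]; show ((m:ℝ)-1) * 0 ≤ (m:ℝ) * (if k₀ = k₀ then (1:ℝ) else 0)
      rw [if_pos rfl]; nlinarith
    · show ((m:ℝ)-1) * 0 ≤ (m:ℝ) * (if k = k₀ then (1:ℝ) else 0)
      rw [if_neg hkk]; nlinarith
  · subst hv
    rw [vv_apply_last m hl₀, sum_vv m hm]
    refine ⟨by nlinarith, fun k hk => ?_, by nlinarith⟩
    rw [vv_apply_lt m hk]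
    nlinarith

lemma Pm_subset_inP (m : ℕ) (hm : 4 ≤ m) : Pm m ⊆ inP m :=
  convexHull_min (Vm_subset_inP m hm) (convex_inP m)

end Ex23
namespace Ex23

lemma intval_le {x y : ℝ} (hx : ∃ z:ℤ, x = (z:ℝ)) (hy : ∃ z:ℤ, y = (z:ℝ))
    (h : y - 1 < x) : y ≤ x := by
  obtain ⟨a, rfl⟩ := hx; obtain ⟨b, rfl⟩ := hy
  have hba : b - 1 < a := by exact_mod_cast h
  exact_mod_cast (by omega : b ≤ a)

lemma erase_lt (m : ℕ) {l₀ : Fin (2*m-1)} (hl₀ : (l₀:ℕ) = 2*m-2)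
    {k : Fin (2*m-1)} (hk : k ∈ Finset.univ.erase l₀) : (k:ℕ) < 2*m-2 := by
  have h1 := Finset.ne_of_mem_erase hk
  have h2 := k.isLt
  have h3 : (k:ℕ) ≠ (l₀:ℕ) := fun he => h1 (Fin.eq_of_val_eq he)
  omega

lemma card_erase (m : ℕ) (hm : 4 ≤ m) (l₀ : Fin (2*m-1)) :
    (Finset.univ.erase l₀).card = 2*m-2 := by
  rw [Finset.card_erase_of_mem (Finset.mem_univ _), Finset.card_univ, Fintype.card_fin]
  omega

lemma cast_2m2 (m : ℕ) (hm : 4 ≤ m) : ((2*m-2:ℕ):ℝ) = 2*(m:ℝ)-2 := by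
  push_cast [Nat.cast_sub (show 2 ≤ 2*m by omega)]; ring

lemma sum_erase_eq (m : ℕ) (x : Pt (2*m-1)) (l₀ : Fin (2*m-1)) :
    ∑ k ∈ Finset.univ.erase l₀, x k = (∑ l, x l) - x l₀ := by
  rw [← Finset.add_sum_erase Finset.univ x (Finset.mem_univ l₀)]; ring

lemma latPts_Pm (m : ℕ) (hm : 4 ≤ m) : latPts (Pm m) ⊆ Vm m := by
  have hm4 : (4:ℝ) ≤ (m:ℝ) := by exact_mod_cast hm
  rintro x ⟨hxP, hxZ⟩
  have hin := Pm_subset_inP m hm hxP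
  have hl₀ : ((⟨2*m-2, by omega⟩ : Fin (2*m-1)):ℕ) = 2*m-2 := rfl
  set l₀ : Fin (2*m-1) := ⟨2*m-2, by omega⟩
  obtain ⟨h1, h2, h3⟩ := hin l₀ hl₀
  obtain ⟨J, hJ⟩ := hxZ l₀
  have hJ0 : (0:ℤ) ≤ J := by rw [hJ] at h1; exact_mod_cast h1
  have hsum3 : (m:ℝ) * (∑ k ∈ Finset.univ.erase l₀, x k)
      ≤ (m:ℝ) + ((2*(m:ℝ)-2)*((m:ℝ)-1)-1) * x l₀ := by
    rw [sum_erase_eq]; exact h3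
  have hlow : ∀ k ∈ Finset.univ.erase l₀, ((m:ℝ)-1) * x l₀ ≤ (m:ℝ) * x k :=
    fun k hk => h2 k (erase_lt m hl₀ hk)
  have hconstsum : ∀ y : ℝ, ∑ _k ∈ Finset.univ.erase l₀, y = (2*(m:ℝ)-2) * y := by
    intro y
    rw [Finset.sum_const, card_erase m hm, nsmul_eq_mul, cast_2m2 m hm]
  have hJm : J ≤ (m:ℤ) := by
    have hsumlow : (2*(m:ℝ)-2) * (((m:ℝ)-1) * x l₀)
        ≤ (m:ℝ) * ∑ k ∈ Finset.univ.erase l₀, x k := by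
      rw [Finset.mul_sum, ← hconstsum (((m:ℝ)-1) * x l₀)]
      exact Finset.sum_le_sum hlow
    have hxm : x l₀ ≤ (m:ℝ) := by nlinarith
    rw [hJ] at hxm; exact_mod_cast hxm
  have hcase : J = 0 ∨ (1 ≤ J ∧ J ≤ (m:ℤ)-1) ∨ J = (m:ℤ) := by omega
  rw [mem_Vm_iff]
  rcases hcase with h0 | ⟨hj1, hj2⟩ | hJm'
  · -- J = 0 : x = 0 or x = ee
    have hx0 : x l₀ = 0 := by rw [hJ, h0]; norm_num
    have hnn : ∀ k ∈ Finset.univ.erase l₀, 0 ≤ x k := by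
      intro k hk; have := hlow k hk; rw [hx0] at this; nlinarith
    have hsle : ∑ k ∈ Finset.univ.erase l₀, x k ≤ 1 := by
      rw [hx0] at hsum3; nlinarith
    by_cases hall : ∀ k ∈ Finset.univ.erase l₀, x k = 0
    · left; funext l
      by_cases hll : l = l₀
      · rw [hll]; exact hx0
      · exact hall l (Finset.mem_erase.2 ⟨hll, Finset.mem_univ l⟩)
    · push_neg at hall
      obtain ⟨k₀, hk₀mem, hk₀ne⟩ := hall
      have hk₀pos : 0 < x k₀ := lt_of_le_of_ne (hnn k₀ hk₀mem) (Ne.symm hk₀ne)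
      have hk₀1 : (1:ℝ) ≤ x k₀ := intval_le (hxZ k₀) ⟨1, by norm_num⟩ (by linarith)
      have hnn2 : ∀ k ∈ (Finset.univ.erase l₀).erase k₀, 0 ≤ x k :=
        fun k hk => hnn k (Finset.mem_of_mem_erase hk)
      have hrest : ∀ k ∈ (Finset.univ.erase l₀).erase k₀, x k = 0 := by
        have hsplit : x k₀ + ∑ k ∈ (Finset.univ.erase l₀).erase k₀, x k
            = ∑ k ∈ Finset.univ.erase l₀, x k := Finset.add_sum_erase _ x hk₀mem
        have hzero : ∑ k ∈ (Finset.univ.erase l₀).erase k₀, x k ≤ 0 := by linarith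
        exact (Finset.sum_eq_zero_iff_of_nonneg hnn2).1
          (le_antisymm hzero (Finset.sum_nonneg hnn2))
      have hk₀eq : x k₀ = 1 := by
        have hle : x k₀ ≤ ∑ k ∈ Finset.univ.erase l₀, x k := Finset.single_le_sum hnn hk₀mem
        linarith
      right; left
      refine ⟨k₀, erase_lt m hl₀ hk₀mem, ?_⟩
      funext l
      by_cases hl1 : l = k₀
      · rw [hl1, hk₀eq]; simp [ee]
      · by_cases hl2 : l = l₀
        · have hne' : l₀ ≠ k₀ := fun h => (Finset.ne_of_mem_erase hk₀mem) h.symm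
          rw [hl2, hx0]; simp [ee, hne']
        · have hmem : l ∈ (Finset.univ.erase l₀).erase k₀ :=
            Finset.mem_erase.2 ⟨hl1, Finset.mem_erase.2 ⟨hl2, Finset.mem_univ l⟩⟩
          rw [hrest l hmem]; simp [ee, hl1]
  · -- 1 ≤ J ≤ m-1 : impossible
    exfalso
    have hj1' : (1:ℝ) ≤ (J:ℝ) := by exact_mod_cast hj1
    have hJlt : (J:ℝ) < (m:ℝ) := by exact_mod_cast (by omega : J < (m:ℤ))
    have hge : ∀ k ∈ Finset.univ.erase l₀, (J:ℝ) ≤ x k := by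
      intro k hk
      apply intval_le (hxZ k) ⟨J, rfl⟩
      have h2k := hlow k hk
      rw [hJ] at h2k
      nlinarith
    have hsumge : (2*(m:ℝ)-2) * (J:ℝ) ≤ ∑ k ∈ Finset.univ.erase l₀, x k := by
      rw [← hconstsum (J:ℝ)]
      exact Finset.sum_le_sum hge
    rw [hJ] at hsum3
    have e1 : (m:ℝ) * ((2*(m:ℝ)-2) * (J:ℝ)) ≤ (m:ℝ) * ∑ k ∈ Finset.univ.erase l₀, x k :=
      mul_le_mul_of_nonneg_left hsumge (by linarith)
    have e2 : 0 ≤ ((J:ℝ) - 1) * (2*(m:ℝ)-1) :=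
      mul_nonneg (by linarith) (by linarith)
    nlinarith [e1, e2, hsum3]
  · -- J = m : x = vv
    right; right
    have hxl : x l₀ = (m:ℝ) := by rw [hJ, hJm']; norm_num
    have hge : ∀ k ∈ Finset.univ.erase l₀, ((m:ℝ)-1) ≤ x k := by
      intro k hk; have := hlow k hk; rw [hxl] at this; nlinarith
    have hsle : ∑ k ∈ Finset.univ.erase l₀, x k ≤ (2*(m:ℝ)-2)*((m:ℝ)-1) := by
      rw [hxl] at hsum3; nlinarith
    have heq : ∀ k ∈ Finset.univ.erase l₀, x k = (m:ℝ)-1 := by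
      intro k hk
      by_contra hne
      have hlt : (m:ℝ)-1 < x k := lt_of_le_of_ne (hge k hk) (Ne.symm hne)
      have hstrict : ∑ _k ∈ Finset.univ.erase l₀, ((m:ℝ)-1)
          < ∑ k ∈ Finset.univ.erase l₀, x k :=
        Finset.sum_lt_sum (fun i hi => hge i hi) ⟨k, hk, hlt⟩
      rw [hconstsum ((m:ℝ)-1)] at hstrict
      linarith
    funext l
    by_cases hll : l = l₀
    · rw [hll, hxl, vv_apply_last m hl₀]
    · have hmem : l ∈ Finset.univ.erase l₀ :=
        Finset.mem_erase.2 ⟨hll, Finset.mem_univ l⟩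
      rw [heq l hmem, vv_apply_lt m (erase_lt m hl₀ hmem)]

end Ex23
namespace Ex23

/-! ### generators -/

def zt (m : ℕ) : Pt (2*m-1) × ℝ := (0, 1)
def et (m : ℕ) (k : Fin (2*m-1)) : Pt (2*m-1) × ℝ := (ee m k, 1)
def vt (m : ℕ) : Pt (2*m-1) × ℝ := (vv m, 1)
def wt (m : ℕ) : Pt (2*m-1) × ℝ := ((fun _ => (1:ℝ)), (2:ℝ))

def GG (m : ℕ) : Set (Pt (2*m-1) × ℝ) :=
  insert (zt m) (insert (vt m) (insert (wt m)
    (et m '' {k : Fin (2*m-1) | (k:ℕ) < 2*m-2})))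

lemma GG_finite (m : ℕ) : (GG m).Finite :=
  ((((Set.toFinite _).image _).insert _).insert _).insert _

lemma zt_mem_GG (m : ℕ) : zt m ∈ GG m := Set.mem_insert _ _
lemma vt_mem_GG (m : ℕ) : vt m ∈ GG m := Set.mem_insert_iff.2 (Or.inr (Set.mem_insert _ _))
lemma wt_mem_GG (m : ℕ) : wt m ∈ GG m :=
  Set.mem_insert_iff.2 (Or.inr (Set.mem_insert_iff.2 (Or.inr (Set.mem_insert _ _))))
lemma et_mem_GG (m : ℕ) {k : Fin (2*m-1)} (hk : (k:ℕ) < 2*m-2) : et m k ∈ GG m :=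
  Set.mem_insert_iff.2 (Or.inr (Set.mem_insert_iff.2 (Or.inr
    (Set.mem_insert_iff.2 (Or.inr ⟨k, hk, rfl⟩)))))

lemma zero_mem_Vm (m : ℕ) : (0 : Pt (2*m-1)) ∈ Vm m := (mem_Vm_iff m 0).2 (Or.inl rfl)
lemma vv_mem_Vm (m : ℕ) : vv m ∈ Vm m := (mem_Vm_iff m _).2 (Or.inr (Or.inr rfl))
lemma ee_mem_Vm (m : ℕ) {k : Fin (2*m-1)} (hk : (k:ℕ) < 2*m-2) : ee m k ∈ Vm m :=
  (mem_Vm_iff m _).2 (Or.inr (Or.inl ⟨k, hk, rfl⟩))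

lemma mem_Pm_of_Vm (m : ℕ) {u} (hu : u ∈ Vm m) : u ∈ Pm m := subset_convexHull ℝ _ hu

lemma isLat_Vm (m : ℕ) {u} (hu : u ∈ Vm m) : IsLat u := by
  rw [mem_Vm_iff] at hu
  rcases hu with h0 | ⟨k, hk, he⟩ | hv
  · exact fun l => ⟨0, by rw [h0]; simp⟩
  · intro l; rw [he]; simp only [ee]
    by_cases hl : l = k
    · exact ⟨1, by rw [if_pos hl]; norm_num⟩
    · exact ⟨0, by rw [if_neg hl]; norm_num⟩
  · intro l; rw [hv]; simp only [vv]
    by_cases hl : (l:ℕ) < 2*m-2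
    · exact ⟨(m:ℤ)-1, by rw [if_pos hl]; push_cast; ring⟩
    · exact ⟨(m:ℤ), by rw [if_neg hl]; push_cast; ring⟩

lemma vert_mem_coneLat (m : ℕ) {u} (hu : u ∈ Vm m) :
    ((u, (1:ℝ)) : Pt (2*m-1) × ℝ) ∈ coneLat (Pm m) := by
  refine ⟨⟨1, fun _ => 1, fun _ => u, fun i => ⟨zero_le_one, mem_Pm_of_Vm m hu⟩, ?_, ?_⟩,
    isLat_Vm m hu, ⟨1, by norm_num⟩⟩
  · show u = ∑ _i : Fin 1, (1:ℝ) • u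
    simp
  · show (1:ℝ) = ∑ _i : Fin 1, (1:ℝ)
    simp

/-! ### the auxiliary vertex list `v0` -/

def v0 (m : ℕ) : Fin (2*m-1+1) → Pt (2*m-1) :=
  fun i => if h : (i:ℕ) < 2*m-2 then ee m ⟨(i:ℕ), by omega⟩
    else if (i:ℕ) = 2*m-2 then vv m else 0

lemma v0_apply (m : ℕ) (i : Fin (2*m-1+1)) (l : Fin (2*m-1)) :
    v0 m i l = (if ((i:ℕ) = (l:ℕ) ∧ (l:ℕ) < 2*m-2) then 1 else 0)
      + (if (i:ℕ) = 2*m-2 then vv m l else 0) := by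
  by_cases h1 : (i:ℕ) < 2*m-2
  · have hne2 : ¬ (i:ℕ) = 2*m-2 := by omega
    simp only [v0, dif_pos h1, ee, if_neg hne2, add_zero]
    by_cases h2 : (i:ℕ) = (l:ℕ)
    · have hl : l = (⟨(i:ℕ), by omega⟩ : Fin (2*m-1)) := Fin.eq_of_val_eq h2.symm
      rw [if_pos hl, if_pos ⟨h2, by omega⟩]
    · have hl : ¬ l = (⟨(i:ℕ), by omega⟩ : Fin (2*m-1)) :=
        fun h => h2 ((congrArg Fin.val h).symm)
      rw [if_neg hl, if_neg (fun hc => h2 hc.1)]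
  · by_cases h2 : (i:ℕ) = 2*m-2
    · have hc1 : ¬ ((i:ℕ) = (l:ℕ) ∧ (l:ℕ) < 2*m-2) := by rintro ⟨a, b⟩; omega
      simp only [v0, dif_neg h1, if_pos h2, if_neg hc1, zero_add]
    · have hc1 : ¬ ((i:ℕ) = (l:ℕ) ∧ (l:ℕ) < 2*m-2) := by
        have := l.isLt; rintro ⟨a, b⟩; omega
      simp only [v0, dif_neg h1, if_neg h2, if_neg hc1, add_zero]
      rfl

lemma sum_v0_apply (m : ℕ) (hm : 4 ≤ m) (l : Fin (2*m-1)) :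
    ∑ i, v0 m i l = (m:ℝ) := by
  have hrw : ∀ i : Fin (2*m-1+1), v0 m i l
      = (if i = (⟨(l:ℕ), by omega⟩ : Fin (2*m-1+1)) then (if (l:ℕ) < 2*m-2 then (1:ℝ) else 0) else 0)
      + (if i = (⟨2*m-2, by omega⟩ : Fin (2*m-1+1)) then vv m l else 0) := by
    intro i
    rw [v0_apply]
    congr 1
    · by_cases h : (i:ℕ) = (l:ℕ)
      · rw [if_pos (Fin.eq_of_val_eq h)]
        by_cases h2 : (l:ℕ) < 2*m-2
        · rw [if_pos ⟨h, h2⟩, if_pos h2]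
        · rw [if_neg (fun hc => h2 hc.2), if_neg h2]
      · rw [if_neg (fun hc => h hc.1), if_neg (fun hc => h (congrArg Fin.val hc))]
    · by_cases h : (i:ℕ) = 2*m-2
      · rw [if_pos h, if_pos (Fin.eq_of_val_eq h)]
      · rw [if_neg h, if_neg (fun hc => h (congrArg Fin.val hc))]
  rw [Finset.sum_congr rfl (fun i _ => hrw i), Finset.sum_add_distrib,
    Finset.sum_ite_eq' Finset.univ _ (fun _ => (if (l:ℕ) < 2*m-2 then (1:ℝ) else 0)),
    Finset.sum_ite_eq' Finset.univ _ (fun _ => vv m l)]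
  simp only [Finset.mem_univ, if_true]
  by_cases h2 : (l:ℕ) < 2*m-2
  · rw [if_pos h2, vv_apply_lt m h2]; ring
  · have hl2 : (l:ℕ) = 2*m-2 := by have := l.isLt; omega
    rw [if_neg h2, vv_apply_last m hl2]; ring

lemma v0_mem_Vm (m : ℕ) (i : Fin (2*m-1+1)) : v0 m i ∈ Vm m := by
  rw [mem_Vm_iff]
  by_cases h1 : (i:ℕ) < 2*m-2
  · right; left
    refine ⟨⟨(i:ℕ), by omega⟩, h1, ?_⟩
    simp only [v0, dif_pos h1]
  · by_cases h2 : (i:ℕ) = 2*m-2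
    · right; right; simp only [v0, dif_neg h1, if_pos h2]
    · left; simp only [v0, dif_neg h1, if_neg h2]

lemma range_v0 (m : ℕ) (hm : 4 ≤ m) : Set.range (v0 m) = Vm m := by
  apply Set.eq_of_subset_of_subset
  · rintro _ ⟨i, rfl⟩; exact v0_mem_Vm m i
  · intro u hu
    rw [mem_Vm_iff] at hu
    rcases hu with h0 | ⟨k, hk, he⟩ | hv
    · refine ⟨⟨2*m-1, by omega⟩, ?_⟩
      simp only [v0]
      rw [dif_neg (show ¬ (2*m-1 < 2*m-2) by omega), if_neg (show ¬ (2*m-1 = 2*m-2) by omega), h0]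
    · refine ⟨⟨(k:ℕ), by omega⟩, ?_⟩
      simp only [v0]
      rw [dif_pos (show (k:ℕ) < 2*m-2 from hk)]
      have hkk : (⟨(k:ℕ), by omega⟩ : Fin (2*m-1)) = k := Fin.eq_of_val_eq rfl
      rw [hkk, he]
    · refine ⟨⟨2*m-2, by omega⟩, ?_⟩
      simp only [v0]
      rw [dif_neg (show ¬ (2*m-2 < 2*m-2) by omega)]
      simp [hv]

lemma wt_mem_coneLat (m : ℕ) (hm : 4 ≤ m) : wt m ∈ coneLat (Pm m) := by
  have hmpos : (0:ℝ) < (m:ℝ) := by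
    have : (4:ℝ) ≤ (m:ℝ) := by exact_mod_cast hm
    linarith
  refine ⟨⟨2*m-1+1, fun _ => 1/(m:ℝ), v0 m,
    fun i => ⟨by positivity, mem_Pm_of_Vm m (v0_mem_Vm m i)⟩, ?_, ?_⟩,
    fun l => ⟨1, by norm_num [wt]⟩, ⟨2, by norm_num [wt]⟩⟩
  · show (fun _ => (1:ℝ)) = ∑ i, (1/(m:ℝ)) • v0 m i
    funext l
    simp only [Finset.sum_apply, Pi.smul_apply, smul_eq_mul]
    rw [← Finset.mul_sum, sum_v0_apply m hm l]
    field_simp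
  · show (2:ℝ) = ∑ _i : Fin (2*m-1+1), 1/(m:ℝ)
    rw [Finset.sum_const, Finset.card_univ, Fintype.card_fin, nsmul_eq_mul]
    have hc : ((2*m-1+1:ℕ):ℝ) = 2*(m:ℝ) := by
      push_cast [Nat.cast_sub (show 1 ≤ 2*m by omega)]; ring
    rw [hc]; field_simp

lemma GG_subset_coneLat (m : ℕ) (hm : 4 ≤ m) : GG m ⊆ coneLat (Pm m) := by
  intro g hg
  rcases hg with h | h | h | ⟨k, hk, he⟩
  · rw [h]; exact vert_mem_coneLat m (zero_mem_Vm m)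
  · rw [h]; exact vert_mem_coneLat m (vv_mem_Vm m)
  · rw [h]; exact wt_mem_coneLat m hm
  · rw [← he]; exact vert_mem_coneLat m (ee_mem_Vm m hk)

end Ex23
namespace Ex23

def inC (m : ℕ) : Set (Pt (2*m-1) × ℝ) :=
  {p | ∀ l₀ : Fin (2*m-1), (l₀:ℕ) = 2*m-2 →
    0 ≤ p.1 l₀ ∧ 0 ≤ p.2 ∧
    (∀ k : Fin (2*m-1), (k:ℕ) < 2*m-2 → ((m:ℝ)-1) * p.1 l₀ ≤ (m:ℝ) * p.1 k) ∧
    (m:ℝ) * ((∑ l, p.1 l) - p.1 l₀)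
      ≤ (m:ℝ) * p.2 + ((2*(m:ℝ)-2)*((m:ℝ)-1) - 1) * p.1 l₀}

lemma coneLat_subset_inC (m : ℕ) (hm : 4 ≤ m) : coneLat (Pm m) ⊆ inC m := by
  rintro p ⟨⟨n, c, w, hcw, h1, h2⟩, -, -⟩ l₀ hl₀
  have hw : ∀ i, w i ∈ inP m := fun i => Pm_subset_inP m hm (hcw i).2
  have happ : ∀ l, p.1 l = ∑ i, c i * w i l := by
    intro l; rw [h1, Finset.sum_apply]
    exact Finset.sum_congr rfl (fun i _ => rfl)
  refine ⟨?_, ?_, fun k hk => ?_, ?_⟩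
  · rw [happ l₀]
    exact Finset.sum_nonneg fun i _ => mul_nonneg (hcw i).1 ((hw i l₀ hl₀).1)
  · rw [h2]; exact Finset.sum_nonneg fun i _ => (hcw i).1
  · rw [happ l₀, happ k, Finset.mul_sum, Finset.mul_sum]
    apply Finset.sum_le_sum
    intro i _
    have h := (hw i l₀ hl₀).2.1 k hk
    have hci := (hcw i).1
    nlinarith [mul_le_mul_of_nonneg_left h hci]
  · have hT : ∑ l, p.1 l = ∑ i, c i * (∑ l, w i l) := by
      simp only [happ]
      rw [Finset.sum_comm]
      exact Finset.sum_congr rfl (fun i _ => by rw [Finset.mul_sum])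
    rw [hT, happ l₀, h2]
    have key : ∀ i, (m:ℝ) * (c i * (∑ l, w i l) - c i * w i l₀)
        ≤ (m:ℝ) * c i + ((2*(m:ℝ)-2)*((m:ℝ)-1) - 1) * (c i * w i l₀) := by
      intro i
      have h := (hw i l₀ hl₀).2.2
      have hci := (hcw i).1
      nlinarith [mul_le_mul_of_nonneg_left h hci]
    calc (m:ℝ) * ((∑ i, c i * (∑ l, w i l)) - ∑ i, c i * w i l₀)
        = ∑ i, (m:ℝ) * (c i * (∑ l, w i l) - c i * w i l₀) := by
          rw [← Finset.sum_sub_distrib, Finset.mul_sum]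
      _ ≤ ∑ i, ((m:ℝ) * c i + ((2*(m:ℝ)-2)*((m:ℝ)-1) - 1) * (c i * w i l₀)) :=
          Finset.sum_le_sum fun i _ => key i
      _ = (m:ℝ) * (∑ i, c i) + ((2*(m:ℝ)-2)*((m:ℝ)-1) - 1) * ∑ i, c i * w i l₀ := by
          rw [Finset.sum_add_distrib, ← Finset.mul_sum, ← Finset.mul_sum]

end Ex23
namespace Ex23

lemma coneLat_subset_closure (m : ℕ) (hm : 4 ≤ m) :
    coneLat (Pm m) ⊆ (AddSubmonoid.closure (GG m) : Set (Pt (2*m-1) × ℝ)) := by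
  intro p hp
  obtain ⟨hrep, hlat, ⟨Dz, hD⟩⟩ := hp
  have hC := coneLat_subset_inC m hm ⟨hrep, hlat, ⟨Dz, hD⟩⟩
  have hl₀ : ((⟨2*m-2, by omega⟩ : Fin (2*m-1)):ℕ) = 2*m-2 := rfl
  set l₀ : Fin (2*m-1) := ⟨2*m-2, by omega⟩ with hl₀def
  obtain ⟨h1, h2p, h2, h3⟩ := hC l₀ hl₀
  choose z hz using hlat
  have hJ0 : 0 ≤ z l₀ := by rw [hz l₀] at h1; exact_mod_cast h1
  set J : ℤ := z l₀ with hJdef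
  set q : ℤ := J / m with hqdef
  set j : ℤ := J % m with hjdef
  have hmZ : (0:ℤ) < (m:ℤ) := by exact_mod_cast (by omega : 0 < m)
  have hqj : (m:ℤ) * q + j = J := Int.mul_ediv_add_emod J m
  have hj0 : 0 ≤ j := Int.emod_nonneg J (by omega)
  have hjm : j < (m:ℤ) := Int.emod_lt_of_pos J hmZ
  have hq0 : 0 ≤ q := Int.ediv_nonneg hJ0 (le_of_lt hmZ)
  have hm4 : (4:ℝ) ≤ (m:ℝ) := by exact_mod_cast hm
  -- lower bounds on the other coordinates
  have hzk : ∀ k ∈ Finset.univ.erase l₀, ((m:ℤ)-1)*q + j ≤ z k := by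
    intro k hk
    have h2k := h2 k (erase_lt m hl₀ hk)
    rw [hz k, hz l₀] at h2k
    have hZ : ((m:ℤ)-1) * z l₀ ≤ (m:ℤ) * z k := by exact_mod_cast h2k
    have hprod : (m:ℤ) * (((m:ℤ)-1)*q + j) < (m:ℤ) * (z k + 1) := by nlinarith [hZ, hqj, hjm, hj0]
    have := lt_of_mul_lt_mul_left hprod (by omega : (0:ℤ) ≤ (m:ℤ))
    omega
  set NN : Fin (2*m-1) → ℤ := fun k => z k - (((m:ℤ)-1)*q + j) with hNNdef
  set S : ℤ := ∑ k ∈ Finset.univ.erase l₀, NN k with hSdef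
  have hS0 : 0 ≤ S := Finset.sum_nonneg fun k hk => by have := hzk k hk; simp only [hNNdef]; omega
  have hsumz : ∑ k ∈ Finset.univ.erase l₀, z k = S + (2*(m:ℤ)-2) * (((m:ℤ)-1)*q + j) := by
    have hcard := card_erase m hm l₀
    rw [hSdef]
    simp only [hNNdef]
    rw [Finset.sum_sub_distrib, Finset.sum_const, hcard, nsmul_eq_mul]
    have hc : ((2*m-2:ℕ):ℤ) = 2*(m:ℤ)-2 := by
      push_cast [Nat.cast_sub (show 2 ≤ 2*m by omega)]; ring
    rw [hc]; ring
  -- degree bound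
  have hDge : S + q + 2*j ≤ Dz := by
    have hEr : ∑ k ∈ Finset.univ.erase l₀, p.1 k
        = ((∑ k ∈ Finset.univ.erase l₀, z k : ℤ) : ℝ) := by
      push_cast
      exact Finset.sum_congr rfl fun k _ => hz k
    have h3' := h3
    rw [← sum_erase_eq m p.1 l₀, hEr, hz l₀, hD, hsumz] at h3'
    have hZ3 : (m:ℤ) * (S + (2*(m:ℤ)-2) * (((m:ℤ)-1)*q + j))
        ≤ (m:ℤ) * Dz + ((2*(m:ℤ)-2)*((m:ℤ)-1)-1) * ((m:ℤ)*q + j) := by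
      rw [hqj]
      exact_mod_cast h3'
    have hmul : (m:ℤ) * (S + q + 2*j) < (m:ℤ) * (Dz + 1) := by nlinarith [hZ3, hjm, hj0]
    have := lt_of_mul_lt_mul_left hmul (by omega : (0:ℤ) ≤ (m:ℤ))
    omega
  -- cast helpers
  have hqr : ((q.toNat : ℕ) : ℝ) = (q : ℝ) := by exact_mod_cast Int.toNat_of_nonneg hq0
  have hjr : ((j.toNat : ℕ) : ℝ) = (j : ℝ) := by exact_mod_cast Int.toNat_of_nonneg hj0
  have hntr : (((Dz - 2*j - q - S).toNat : ℕ) : ℝ) = ((Dz - 2*j - q - S : ℤ) : ℝ) := by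
    exact_mod_cast Int.toNat_of_nonneg (by omega)
  have hNr : ∀ k ∈ Finset.univ.erase l₀, (((NN k).toNat : ℕ) : ℝ) = ((NN k : ℤ) : ℝ) := by
    intro k hk
    exact_mod_cast Int.toNat_of_nonneg (by have := hzk k hk; simp only [hNNdef]; omega)
  -- the decomposition
  have hdecomp : p = (Dz - 2*j - q - S).toNat • zt m + q.toNat • vt m
      + j.toNat • wt m
      + ∑ k ∈ Finset.univ.erase l₀, (NN k).toNat • et m k := by
    have hqjr : (m:ℝ) * (q:ℝ) + (j:ℝ) = ((J:ℤ):ℝ) := by exact_mod_cast hqj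
    rw [Prod.ext_iff]
    constructor
    · funext l
      simp only [Prod.fst_add, Prod.fst_sum, zt, vt, wt, et, nsmul_eq_mul,
        Prod.fst_mul, Prod.fst_natCast, Pi.mul_apply, Pi.natCast_apply,
        Pi.add_apply, Finset.sum_apply,
        Pi.zero_apply, mul_zero, mul_one, zero_add]
      have hsum_ee : ∑ k ∈ Finset.univ.erase l₀, ((NN k).toNat : ℝ) * ee m k l
          = if l ∈ Finset.univ.erase l₀ then ((NN l).toNat : ℝ) else 0 := by
        rw [← Finset.sum_ite_eq (Finset.univ.erase l₀) l (fun k => ((NN k).toNat : ℝ))]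
        apply Finset.sum_congr rfl
        intro k _
        simp only [ee]
        by_cases hlk : l = k
        · rw [if_pos hlk, if_pos hlk, mul_one]
        · rw [if_neg hlk, if_neg hlk, mul_zero]
      rw [hsum_ee]
      by_cases hll : l = l₀
      · rw [if_neg (by rw [hll]; exact Finset.notMem_erase l₀ _)]
        rw [hll, hz l₀, vv_apply_last m hl₀, hqr, hjr]
        linarith [hqjr]
      · have hmem : l ∈ Finset.univ.erase l₀ := Finset.mem_erase.2 ⟨hll, Finset.mem_univ l⟩
        rw [if_pos hmem, hz l, vv_apply_lt m (erase_lt m hl₀ hmem), hqr, hjr, hNr l hmem]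
        simp only [hNNdef]
        push_cast
        ring
    · have hsumS : ∑ k ∈ Finset.univ.erase l₀, (((NN k).toNat:ℕ) : ℝ) = ((S:ℤ) : ℝ) := by
        rw [Finset.sum_congr rfl hNr, hSdef]
        push_cast
        rfl
      show p.2 = _
      simp only [Prod.snd_add, Prod.snd_sum, zt, vt, wt, et, nsmul_eq_mul,
        Prod.snd_mul, Prod.snd_natCast, mul_one]
      rw [hD, hqr, hjr, hntr, hsumS]
      push_cast
      ring
  rw [hdecomp]
  refine AddSubmonoid.add_mem _ (AddSubmonoid.add_mem _ (AddSubmonoid.add_mem _ ?_ ?_) ?_) ?_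
  · exact AddSubmonoid.nsmul_mem _ (AddSubmonoid.subset_closure (zt_mem_GG m)) _
  · exact AddSubmonoid.nsmul_mem _ (AddSubmonoid.subset_closure (vt_mem_GG m)) _
  · exact AddSubmonoid.nsmul_mem _ (AddSubmonoid.subset_closure (wt_mem_GG m)) _
  · exact AddSubmonoid.sum_mem _ fun k hk => AddSubmonoid.nsmul_mem _
      (AddSubmonoid.subset_closure (et_mem_GG m (erase_lt m hl₀ hk))) _

end Ex23
namespace Ex23

lemma sum_const_erase (m : ℕ) (hm : 4 ≤ m) (l₀ : Fin (2*m-1)) (y : ℝ) :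
    ∑ _k ∈ Finset.univ.erase l₀, y = (2*(m:ℝ)-2) * y := by
  rw [Finset.sum_const, card_erase m hm, nsmul_eq_mul, cast_2m2 m hm]

lemma pre_sum_mem (m : ℕ) {v : Fin (2*m-1+1) → Pt (2*m-1)} (hinj : Function.Injective v)
    (r : Fin (2*m-1+1) → ℝ) (hr : ∀ i, 0 ≤ r i ∧ r i < 1) (u : Pt (2*m-1)) :
    0 ≤ ∑ i ∈ Finset.univ.filter (fun i => v i = u), r i ∧
    (∑ i ∈ Finset.univ.filter (fun i => v i = u), r i) < 1 := by
  have hcard : (Finset.univ.filter (fun i => v i = u)).card ≤ 1 :=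
    Finset.card_le_one.2 (fun a ha b hb => hinj (by
      rw [(Finset.mem_filter.1 ha).2, (Finset.mem_filter.1 hb).2]))
  rcases Nat.le_one_iff_eq_zero_or_eq_one.1 hcard with h | h
  · rw [Finset.card_eq_zero.1 h, Finset.sum_empty]
    exact ⟨le_refl _, zero_lt_one⟩
  · obtain ⟨a, ha⟩ := Finset.card_eq_one.1 h
    rw [ha, Finset.sum_singleton]
    exact hr a

lemma cancel_m (m : ℕ) (hm : 4 ≤ m) {a : ℤ} {t : ℝ} (h : (m:ℝ) * (a:ℝ) = t)
    (h0 : -(m:ℝ) < t) (h1 : t < (m:ℝ)) : a = 0 := by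
  have hm4 : (4:ℝ) ≤ (m:ℝ) := by exact_mod_cast hm
  have ha1 : (a:ℝ) < 1 := by nlinarith
  have ha2 : (-1:ℝ) < (a:ℝ) := by nlinarith
  have h1' : a < 1 := by exact_mod_cast ha1
  have h2' : (-1:ℤ) < a := by exact_mod_cast ha2
  omega

lemma boxSimplex_sub (m : ℕ) (hm : 4 ≤ m) {v : Fin (2*m-1+1) → Pt (2*m-1)}
    (hv : ∀ i, v i ∈ Vm m) (hinj : Function.Injective v) :
    boxSimplex v ⊆ {p : Pt (2*m-1) × ℝ | ∃ j : ℕ, j ≤ m - 1 ∧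
      p = (fun _ => (j:ℝ), (2*(j:ℝ)))} := by
  have hm4 : (4:ℝ) ≤ (m:ℝ) := by exact_mod_cast hm
  have hm0 : (m:ℝ) ≠ 0 := ne_of_gt (by linarith)
  rintro p ⟨r, hr, hp1, hp2, hlat, ⟨Dz, hD⟩⟩
  have hl₀ : ((⟨2*m-2, by omega⟩ : Fin (2*m-1)):ℕ) = 2*m-2 := rfl
  set l₀ : Fin (2*m-1) := ⟨2*m-2, by omega⟩ with hl₀def
  -- distinctness of vertices
  have hvv0 : vv m ≠ (0 : Pt (2*m-1)) := by
    intro h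
    have h2 := congrFun h l₀
    rw [vv_apply_last m hl₀] at h2
    have h3 : (0 : Pt (2*m-1)) l₀ = 0 := rfl
    rw [h3] at h2; linarith
  have hee0 : ∀ k : Fin (2*m-1), ee m k ≠ (0 : Pt (2*m-1)) := by
    intro k h
    have h2 := congrFun h k
    have e1 : ee m k k = 1 := if_pos rfl
    have e2 : (0 : Pt (2*m-1)) k = 0 := rfl
    rw [e1, e2] at h2; linarith
  have heevv : ∀ k : Fin (2*m-1), (k:ℕ) < 2*m-2 → ee m k ≠ vv m := by
    intro k hk h
    have h2 := congrFun h l₀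
    rw [vv_apply_last m hl₀] at h2
    have e1 : ee m k l₀ = 0 := if_neg (Fin.ne_of_val_ne (show (l₀:ℕ) ≠ (k:ℕ) by omega))
    rw [e1] at h2; linarith
  have heeinj : ∀ k k' : Fin (2*m-1), ee m k = ee m k' → k = k' := by
    intro k k' h
    by_contra hne
    have h2 := congrFun h k
    have e1 : ee m k k = 1 := if_pos rfl
    have e2 : ee m k' k = 0 := if_neg hne
    rw [e1, e2] at h2; linarith
  have happ : ∀ l, p.1 l = ∑ i, r i * v i l := by
    intro l; rw [hp1, Finset.sum_apply]
    exact Finset.sum_congr rfl (fun i _ => rfl)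
  obtain ⟨hR0, hR1⟩ := pre_sum_mem m hinj r hr (vv m)
  set R : ℝ := ∑ i ∈ Finset.univ.filter (fun i => v i = vv m), r i with hR
  -- last coordinate
  have hcoordlast : p.1 l₀ = (m:ℝ) * R := by
    rw [happ l₀]
    calc ∑ i, r i * v i l₀
        = ∑ i, (if v i = vv m then (m:ℝ) * r i else 0) := by
          apply Finset.sum_congr rfl
          intro i _
          rcases (mem_Vm_iff m (v i)).1 (hv i) with h0 | ⟨k, hk, he⟩ | hvv
          · rw [h0, if_neg (fun hc => hvv0 hc.symm)]
            rw [show (0 : Pt (2*m-1)) l₀ = 0 from rfl, mul_zero]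
          · rw [he, if_neg (heevv k hk)]
            rw [show ee m k l₀ = 0 from
              if_neg (Fin.ne_of_val_ne (show (l₀:ℕ) ≠ (k:ℕ) by omega)), mul_zero]
          · rw [hvv, if_pos rfl, vv_apply_last m hl₀]; ring
      _ = ∑ i ∈ Finset.univ.filter (fun i => v i = vv m), (m:ℝ) * r i :=
          (Finset.sum_filter _ _).symm
      _ = (m:ℝ) * R := by rw [hR, Finset.mul_sum]
  -- other coordinates
  have hcoordlt : ∀ l : Fin (2*m-1), (l:ℕ) < 2*m-2 →
      p.1 l = ((m:ℝ)-1) * R + ∑ i ∈ Finset.univ.filter (fun i => v i = ee m l), r i := by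
    intro l hl
    rw [happ l]
    calc ∑ i, r i * v i l
        = ∑ i, ((if v i = vv m then ((m:ℝ)-1) * r i else 0)
            + (if v i = ee m l then r i else 0)) := by
          apply Finset.sum_congr rfl
          intro i _
          rcases (mem_Vm_iff m (v i)).1 (hv i) with h0 | ⟨k, hk, he⟩ | hvv
          · rw [h0, if_neg (fun hc => hvv0 hc.symm), if_neg (fun hc => hee0 l hc.symm)]
            rw [show (0 : Pt (2*m-1)) l = 0 from rfl, mul_zero, add_zero]
          · rw [he, if_neg (heevv k hk)]
            by_cases hkl : k = l
            · rw [if_pos (by rw [hkl]), show ee m k l = 1 from if_pos hkl.symm]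
              ring
            · rw [if_neg (fun hc => hkl (heeinj k l hc)),
                show ee m k l = 0 from if_neg (fun hc => hkl hc.symm)]
              ring
          · rw [hvv, if_pos rfl, if_neg (fun hc => heevv l hl hc.symm),
              vv_apply_lt m hl]
            ring
      _ = (∑ i, (if v i = vv m then ((m:ℝ)-1) * r i else 0))
          + ∑ i, (if v i = ee m l then r i else 0) := Finset.sum_add_distrib
      _ = ((m:ℝ)-1) * R + ∑ i ∈ Finset.univ.filter (fun i => v i = ee m l), r i := by
          rw [← Finset.sum_filter, ← Finset.sum_filter, hR, Finset.mul_sum]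
  -- the weight identity
  have hα : ∀ i, (if v i = (0 : Pt (2*m-1)) then r i else 0)
      = r i * (1 - (∑ k ∈ Finset.univ.erase l₀, v i k)
          + (((2*(m:ℝ)-2)*((m:ℝ)-1)-1)/(m:ℝ)) * v i l₀) := by
    intro i
    have hcan : (((2*(m:ℝ)-2)*((m:ℝ)-1)-1)/(m:ℝ)) * (m:ℝ)
        = (2*(m:ℝ)-2)*((m:ℝ)-1)-1 := div_mul_cancel₀ _ hm0
    rcases (mem_Vm_iff m (v i)).1 (hv i) with h0 | ⟨k, hk, he⟩ | hvv
    · rw [h0, if_pos rfl]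
      have hs : (∑ k ∈ Finset.univ.erase l₀, (0 : Pt (2*m-1)) k) = 0 :=
        Finset.sum_eq_zero (fun k _ => rfl)
      rw [hs, show (0 : Pt (2*m-1)) l₀ = 0 from rfl]
      ring
    · rw [he, if_neg (fun hc => hee0 k hc)]
      have hkE : k ∈ Finset.univ.erase l₀ :=
        Finset.mem_erase.2 ⟨Fin.ne_of_val_ne (show (k:ℕ) ≠ (l₀:ℕ) by omega), Finset.mem_univ k⟩
      have hsum1 : ∑ k' ∈ Finset.univ.erase l₀, ee m k k' = 1 := by
        have : ∀ k', ee m k k' = if k' = k then (1:ℝ) else 0 := fun _ => rfl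
        rw [Finset.sum_congr rfl (fun k' _ => this k'),
          Finset.sum_ite_eq' (Finset.univ.erase l₀) k (fun _ => (1:ℝ)), if_pos hkE]
      have e0 : ee m k l₀ = 0 :=
        if_neg (Fin.ne_of_val_ne (show (l₀:ℕ) ≠ (k:ℕ) by omega))
      rw [hsum1, e0]; ring
    · rw [hvv, if_neg (fun hc => hvv0 hc)]
      have hsumv : ∑ k ∈ Finset.univ.erase l₀, vv m k = (2*(m:ℝ)-2) * ((m:ℝ)-1) := by
        rw [Finset.sum_congr rfl (fun k hk => vv_apply_lt m (erase_lt m hl₀ hk))]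
        exact sum_const_erase m hm l₀ _
      rw [hsumv, vv_apply_last m hl₀, hcan]
      ring
  obtain ⟨hB0, hB1⟩ := pre_sum_mem m hinj r hr (0 : Pt (2*m-1))
  set B : ℝ := ∑ i ∈ Finset.univ.filter (fun i => v i = (0 : Pt (2*m-1))), r i with hB
  have hweight : B = p.2 - (∑ k ∈ Finset.univ.erase l₀, p.1 k)
      + (((2*(m:ℝ)-2)*((m:ℝ)-1)-1)/(m:ℝ)) * p.1 l₀ := by
    rw [hB]
    calc ∑ i ∈ Finset.univ.filter (fun i => v i = (0 : Pt (2*m-1))), r i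
        = ∑ i, (if v i = (0 : Pt (2*m-1)) then r i else 0) := Finset.sum_filter _ _
      _ = ∑ i, (r i - (∑ k ∈ Finset.univ.erase l₀, r i * v i k)
            + (((2*(m:ℝ)-2)*((m:ℝ)-1)-1)/(m:ℝ)) * (r i * v i l₀)) := by
          apply Finset.sum_congr rfl
          intro i _
          rw [hα i]
          have hms : (∑ k ∈ Finset.univ.erase l₀, r i * v i k)
              = r i * (∑ k ∈ Finset.univ.erase l₀, v i k) := by rw [Finset.mul_sum]
          rw [hms]; ring
      _ = (∑ i, r i) - (∑ i, (∑ k ∈ Finset.univ.erase l₀, r i * v i k))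
            + (((2*(m:ℝ)-2)*((m:ℝ)-1)-1)/(m:ℝ)) * (∑ i, r i * v i l₀) := by
          rw [Finset.sum_add_distrib, Finset.sum_sub_distrib, Finset.mul_sum]
      _ = p.2 - (∑ k ∈ Finset.univ.erase l₀, p.1 k)
            + (((2*(m:ℝ)-2)*((m:ℝ)-1)-1)/(m:ℝ)) * p.1 l₀ := by
          rw [← hp2, Finset.sum_comm, ← happ l₀]
          rw [Finset.sum_congr rfl (fun k _ => (happ k).symm)]
  -- extract the integer
  obtain ⟨z₀, hz₀⟩ := hlat l₀
  have hz₀R : (z₀:ℝ) = (m:ℝ) * R := by rw [← hz₀]; exact hcoordlast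
  have hmpos : (0:ℝ) < (m:ℝ) := by linarith
  have hz₀0 : (0:ℝ) ≤ (z₀:ℝ) := by
    rw [hz₀R]; exact mul_nonneg (by linarith) hR0
  have hz₀m : (z₀:ℝ) < (m:ℝ) := by
    rw [hz₀R]
    calc (m:ℝ) * R < (m:ℝ) * 1 := by exact mul_lt_mul_of_pos_left hR1 hmpos
      _ = (m:ℝ) := mul_one _
  have hz₀0' : (0:ℤ) ≤ z₀ := by exact_mod_cast hz₀0
  have hz₀m' : z₀ < (m:ℤ) := by exact_mod_cast hz₀m
  -- all other coordinates equal z₀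
  have hcoords : ∀ l : Fin (2*m-1), (l:ℕ) < 2*m-2 → p.1 l = (z₀:ℝ) := by
    intro l hl
    obtain ⟨zl, hzl⟩ := hlat l
    obtain ⟨hE0, hE1⟩ := pre_sum_mem m hinj r hr (ee m l)
    have hcl := hcoordlt l hl
    rw [hzl] at hcl
    have hz : zl - z₀ = 0 := by
      apply cancel_m m hm
        (t := (m:ℝ) * (∑ i ∈ Finset.univ.filter (fun i => v i = ee m l), r i) - (z₀:ℝ))
      · push_cast
        linear_combination (m:ℝ) * hcl - ((m:ℝ)-1) * hz₀R
      · have h1 : 0 ≤ (m:ℝ) * (∑ i ∈ Finset.univ.filter (fun i => v i = ee m l), r i) :=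
          mul_nonneg (by linarith) hE0
        linarith
      · have h1 : (m:ℝ) * (∑ i ∈ Finset.univ.filter (fun i => v i = ee m l), r i)
            < (m:ℝ) * 1 := mul_lt_mul_of_pos_left hE1 hmpos
        linarith
    have : zl = z₀ := by omega
    rw [hzl, this]
  -- degree
  have hErsum : ∑ k ∈ Finset.univ.erase l₀, p.1 k = (2*(m:ℝ)-2) * (z₀:ℝ) := by
    rw [Finset.sum_congr rfl (fun k hk => hcoords k (erase_lt m hl₀ hk))]
    exact sum_const_erase m hm l₀ _
  have hDeq : Dz - 2 * z₀ = 0 := by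
    apply cancel_m m hm (t := (m:ℝ) * B - (z₀:ℝ))
    · rw [hweight, hErsum, hD, hz₀]
      push_cast
      field_simp
      ring
    · have h1 : 0 ≤ (m:ℝ) * B := mul_nonneg (by linarith) hB0
      linarith
    · have h1 : (m:ℝ) * B < (m:ℝ) * 1 := mul_lt_mul_of_pos_left hB1 hmpos
      linarith
  -- conclusion
  have hcast : ((z₀.toNat:ℕ):ℝ) = (z₀:ℝ) := by exact_mod_cast Int.toNat_of_nonneg hz₀0'
  refine ⟨z₀.toNat, by omega, ?_⟩
  rw [Prod.ext_iff]
  constructor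
  · funext l
    show p.1 l = ((z₀.toNat:ℕ):ℝ)
    rw [hcast]
    by_cases hll : l = l₀
    · rw [hll, hz₀]
    · refine hcoords l ?_
      have h1 := l.isLt
      have h2 : (l:ℕ) ≠ (l₀:ℕ) := fun h => hll (Fin.eq_of_val_eq h)
      omega
  · show p.2 = 2 * ((z₀.toNat:ℕ):ℝ)
    rw [hcast, hD, show Dz = 2 * z₀ by omega]
    push_cast
    ring

end Ex23
namespace Ex23

lemma hterm_last (m : ℕ) (hm : 4 ≤ m) (w : Fin (2*m-1+1) → ℝ)
    (iv : Fin (2*m-1+1)) (hivv : (iv:ℕ) = 2*m-2)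
    {l₀ : Fin (2*m-1)} (hl₀ : (l₀:ℕ) = 2*m-2) (i : Fin (2*m-1+1)) :
    w i * v0 m i l₀ = (if i = iv then (m:ℝ) * w i else 0) := by
  rw [v0_apply]
  rw [if_neg (fun hc => absurd hc.2 (by omega))]
  by_cases hcc : (i:ℕ) = 2*m-2
  · rw [if_pos hcc, if_pos (Fin.eq_of_val_eq (by rw [hcc, hivv] : (i:ℕ) = (iv:ℕ))),
      vv_apply_last m hl₀, zero_add]
    ring
  · have hne3 : ¬ i = iv := fun hc => hcc (by rw [hc, hivv])
    rw [if_neg hcc, if_neg hne3, zero_add, mul_zero]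

lemma hterm_lt (m : ℕ) (hm : 4 ≤ m) (w : Fin (2*m-1+1) → ℝ)
    (i : Fin (2*m-1+1)) (hi : (i:ℕ) < 2*m-2) (iv : Fin (2*m-1+1)) (hivv : (iv:ℕ) = 2*m-2)
    {l : Fin (2*m-1)} (hl : (l:ℕ) = (i:ℕ)) (i' : Fin (2*m-1+1)) :
    w i' * v0 m i' l
      = (if i' = i then w i' else 0) + (if i' = iv then ((m:ℝ)-1) * w i' else 0) := by
  have hllt : (l:ℕ) < 2*m-2 := by omega
  rw [v0_apply]
  by_cases hc1 : (i':ℕ) = (i:ℕ)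
  · have he : i' = i := Fin.eq_of_val_eq hc1
    have hne2 : ¬ (i':ℕ) = 2*m-2 := by omega
    have hne3 : ¬ i' = iv := fun hc => hne2 (by rw [hc, hivv])
    rw [if_pos (show (i':ℕ) = (l:ℕ) ∧ (l:ℕ) < 2*m-2 by rw [hl]; exact ⟨hc1, hi⟩),
      if_pos he, if_neg hne2, if_neg hne3, add_zero, add_zero, mul_one]
  · have hcl : ¬ ((i':ℕ) = (l:ℕ) ∧ (l:ℕ) < 2*m-2) := fun hc => hc1 (by omega)
    have hnei : ¬ i' = i := fun hc => hc1 (congrArg Fin.val hc)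
    rw [if_neg hcl, if_neg hnei, zero_add]
    by_cases hc2 : (i':ℕ) = 2*m-2
    · rw [if_pos hc2, if_pos (Fin.eq_of_val_eq (by rw [hc2, hivv] : (i':ℕ) = (iv:ℕ))),
        vv_apply_lt m hllt]
      ring
    · have hne3 : ¬ i' = iv := fun hc => hc2 (by rw [hc, hivv])
      rw [if_neg hc2, if_neg hne3, add_zero, mul_zero]

lemma v0_key (m : ℕ) (hm : 4 ≤ m) :
    ∀ w : Fin (2*m-1+1) → ℝ, ∑ i, w i = 0 → ∑ i, w i • v0 m i = 0 →
      ∀ i, w i = 0 := by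
  intro w hw0 hws
  have hm4 : (4:ℝ) ≤ (m:ℝ) := by exact_mod_cast hm
  have hm0 : (m:ℝ) ≠ 0 := ne_of_gt (by linarith)
  have happ : ∀ l, ∑ i, w i * v0 m i l = 0 := by
    intro l
    have h := congrFun hws l
    rw [Finset.sum_apply] at h
    simpa using h
  -- coefficient of the big vertex
  have hiv : w ⟨2*m-2, by omega⟩ = 0 := by
    have h := happ ⟨2*m-2, by omega⟩
    rw [Finset.sum_congr rfl
        (fun i _ => hterm_last m hm w ⟨2*m-2, by omega⟩ rfl rfl i),
      Finset.sum_ite_eq' Finset.univ _ (fun i => (m:ℝ) * w i),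
      if_pos (Finset.mem_univ _)] at h
    exact (mul_eq_zero.1 h).resolve_left hm0
  -- coefficients of the basis vertices
  have hei : ∀ i : Fin (2*m-1+1), (i:ℕ) < 2*m-2 → w i = 0 := by
    intro i hi
    have h := happ ⟨(i:ℕ), by omega⟩
    rw [Finset.sum_congr rfl
        (fun i' _ => hterm_lt m hm w i hi ⟨2*m-2, by omega⟩ rfl rfl i'),
      Finset.sum_add_distrib,
      Finset.sum_ite_eq' Finset.univ i (fun i' => w i'),
      Finset.sum_ite_eq' Finset.univ _ (fun i' => ((m:ℝ)-1) * w i'),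
      if_pos (Finset.mem_univ _), if_pos (Finset.mem_univ _), hiv] at h
    have h2 : w i + ((m:ℝ)-1) * 0 = 0 := h
    linarith
  -- coefficient of the zero vertex
  have hiz : w ⟨2*m-1, by omega⟩ = 0 := by
    have h := Finset.sum_eq_single (s := Finset.univ) (f := fun i => w i)
      (⟨2*m-1, by omega⟩ : Fin (2*m-1+1))
      (fun b _ hb => by
        have hbv := b.isLt
        have hbv2 : (b:ℕ) ≠ 2*m-1 := fun hc => hb (Fin.eq_of_val_eq hc)
        rcases Nat.lt_or_ge (b:ℕ) (2*m-2) with hlt | hge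
        · exact hei b hlt
        · have hbe : (b:ℕ) = 2*m-2 := by omega
          rw [show b = (⟨2*m-2, by omega⟩ : Fin (2*m-1+1)) from Fin.eq_of_val_eq hbe]
          exact hiv)
      (fun hni => absurd (Finset.mem_univ _) hni)
    rw [hw0] at h
    exact h.symm
  intro i
  have hival := i.isLt
  rcases Nat.lt_or_ge (i:ℕ) (2*m-2) with hlt | hge
  · exact hei i hlt
  · rcases Nat.lt_or_ge (i:ℕ) (2*m-1) with hlt2 | hge2
    · rw [show i = (⟨2*m-2, by omega⟩ : Fin (2*m-1+1)) from
        Fin.eq_of_val_eq (show (i:ℕ) = 2*m-2 by omega)]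
      exact hiv
    · rw [show i = (⟨2*m-1, by omega⟩ : Fin (2*m-1+1)) from
        Fin.eq_of_val_eq (show (i:ℕ) = 2*m-1 by omega)]
      exact hiz

lemma v0_affineIndependent (m : ℕ) (hm : 4 ≤ m) : AffineIndependent ℝ (v0 m) := by
  rw [affineIndependent_iff]
  intro s w hw hsum e he
  have h1 : ∑ i, (if i ∈ s then w i else 0) = 0 := by
    rw [Finset.sum_ite_mem, Finset.univ_inter]; exact hw
  have h2 : ∑ i, (if i ∈ s then w i else 0) • v0 m i = 0 := by
    have : ∀ i : Fin (2*m-1+1), (if i ∈ s then w i else 0) • v0 m i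
        = (if i ∈ s then w i • v0 m i else 0) := by
      intro i; by_cases h : i ∈ s
      · rw [if_pos h, if_pos h]
      · rw [if_neg h, if_neg h, zero_smul]
    rw [Finset.sum_congr rfl (fun i _ => this i), Finset.sum_ite_mem, Finset.univ_inter]
    exact hsum
  have := v0_key m hm _ h1 h2 e
  rw [if_pos he] at this
  exact this

lemma v0_emptySimplex (m : ℕ) (hm : 4 ≤ m) :
    EmptySimplexIn (Pm m) (2*m-1) (v0 m) := by
  refine ⟨fun i => ⟨mem_Pm_of_Vm m (v0_mem_Vm m i), isLat_Vm m (v0_mem_Vm m i)⟩,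
    v0_affineIndependent m hm, ?_⟩
  intro x hx hlat
  rw [range_v0 m hm] at hx ⊢
  exact latPts_Pm m hm ⟨hx, hlat⟩

lemma not_mem_genMonoid (m : ℕ) (hm : 4 ≤ m) {j : ℕ} (hj1 : 1 ≤ j) (hj2 : j ≤ m-1) :
    (((fun _ => (j:ℝ)), (2*(j:ℝ))) : Pt (2*m-1) × ℝ) ∉ genMonoid (Pm m) := by
  have hm4 : (4:ℝ) ≤ (m:ℝ) := by exact_mod_cast hm
  rintro ⟨n, f, hf, h1, h2⟩
  have hl₀v : ((⟨2*m-2, by omega⟩ : Fin (2*m-1)):ℕ) = 2*m-2 := rfl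
  set l₀ : Fin (2*m-1) := ⟨2*m-2, by omega⟩
  have hval : ∀ i, f i l₀ = 0 ∨ f i l₀ = (m:ℝ) := by
    intro i
    have hVm := latPts_Pm m hm (hf i)
    rcases (mem_Vm_iff m (f i)).1 hVm with h0 | ⟨k, hk, he⟩ | hv
    · left; rw [h0]; rfl
    · left; rw [he]
      exact if_neg (Fin.ne_of_val_ne (show (l₀:ℕ) ≠ (k:ℕ) by omega))
    · right; rw [hv]; exact vv_apply_last m hl₀v
  have hcong := congrFun h1 l₀
  rw [Finset.sum_apply] at hcong
  have hsum : (j:ℝ) = ∑ i ∈ Finset.univ.filter (fun i => f i l₀ = (m:ℝ)), (m:ℝ) := by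
    calc (j:ℝ) = ∑ i, f i l₀ := hcong
      _ = ∑ i, (if f i l₀ = (m:ℝ) then (m:ℝ) else 0) := by
          apply Finset.sum_congr rfl
          intro i _
          rcases hval i with h | h
          · rw [h, if_neg (show ¬ ((0:ℝ) = (m:ℝ)) by intro hc; linarith)]
          · rw [h, if_pos rfl]
      _ = ∑ i ∈ Finset.univ.filter (fun i => f i l₀ = (m:ℝ)), (m:ℝ) :=
          (Finset.sum_filter _ _).symm
  rw [Finset.sum_const, nsmul_eq_mul] at hsum
  have hjc : j = (Finset.univ.filter (fun i => f i l₀ = (m:ℝ))).card * m := by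
    exact_mod_cast hsum
  rcases Nat.eq_zero_or_pos (Finset.univ.filter (fun i => f i l₀ = (m:ℝ))).card with h | h
  · rw [h] at hjc; omega
  · have : m ≤ (Finset.univ.filter (fun i => f i l₀ = (m:ℝ))).card * m :=
      Nat.le_mul_of_pos_left m h
    omega

lemma box_point_mem (m : ℕ) (hm : 4 ≤ m) (j : ℕ) (hj2 : j ≤ m-1) :
    (((fun _ => (j:ℝ)), (2*(j:ℝ))) : Pt (2*m-1) × ℝ) ∈ boxSimplex (v0 m) := by
  have hm4 : (4:ℝ) ≤ (m:ℝ) := by exact_mod_cast hm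
  have hmpos : (0:ℝ) < (m:ℝ) := by linarith
  have hjm : (j:ℝ) < (m:ℝ) := by exact_mod_cast (show j < m by omega)
  have hj0 : (0:ℝ) ≤ (j:ℝ) := by positivity
  refine ⟨fun _ => (j:ℝ)/(m:ℝ),
    fun i => ⟨by positivity, by rw [div_lt_one hmpos]; exact hjm⟩, ?_, ?_,
    fun l => ⟨(j:ℤ), by push_cast; ring⟩, ⟨2*(j:ℤ), by push_cast; ring⟩⟩
  · funext l
    show (j:ℝ) = (∑ i, ((j:ℝ)/(m:ℝ)) • v0 m i) l
    rw [Finset.sum_apply]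
    simp only [Pi.smul_apply, smul_eq_mul]
    rw [← Finset.mul_sum, sum_v0_apply m hm l]
    field_simp
  · show 2*(j:ℝ) = ∑ _i : Fin (2*m-1+1), (j:ℝ)/(m:ℝ)
    rw [Finset.sum_const, Finset.card_univ, Fintype.card_fin, nsmul_eq_mul]
    have hc : ((2*m-1+1:ℕ):ℝ) = 2*(m:ℝ) := by
      push_cast [Nat.cast_sub (show 1 ≤ 2*m by omega)]; ring
    rw [hc]
    field_simp

lemma boxP_eq (m : ℕ) (hm : 4 ≤ m) :
    boxP (Pm m) (2*m-1) =
      {p : Pt (2*m-1) × ℝ | ∃ j : ℕ, 1 ≤ j ∧ j ≤ m - 1 ∧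
        p = (fun _ => (j : ℝ), (2*j : ℝ))} := by
  apply Set.eq_of_subset_of_subset
  · rintro p ⟨hmem, hng⟩
    simp only [Set.mem_iUnion, Set.mem_setOf_eq] at hmem
    obtain ⟨v, hv, hpv⟩ := hmem
    obtain ⟨hlat', haff, hempty⟩ := hv
    have hVm : ∀ i, v i ∈ Vm m := fun i => latPts_Pm m hm (hlat' i)
    have hinj := haff.injective
    obtain ⟨j, hjle, hpe⟩ := boxSimplex_sub m hm hVm hinj hpv
    rcases Nat.eq_zero_or_pos j with h0 | h1
    · exfalso
      apply hng
      rw [hpe, h0]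
      refine ⟨0, fun i => i.elim0, fun i => i.elim0, ?_, by norm_num⟩
      funext l
      simp
    · exact ⟨j, h1, hjle, hpe⟩
  · rintro p ⟨j, hj1, hj2, hpe⟩
    constructor
    · simp only [Set.mem_iUnion, Set.mem_setOf_eq]
      exact ⟨v0 m, v0_emptySimplex m hm, hpe ▸ box_point_mem m hm j hj2⟩
    · rw [hpe]
      exact not_mem_genMonoid m hm hj1 hj2

end Ex23
namespace Ex23

lemma GG_deg (m : ℕ) : ∀ g ∈ GG m, g.2 = 1 ∨ g = wt m := by
  intro g hg
  rcases hg with h | h | h | ⟨k, hk, he⟩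
  · left; rw [h]; rfl
  · left; rw [h]; rfl
  · right; exact h
  · left; rw [← he]; rfl

lemma GG_last (m : ℕ) (hm : 4 ≤ m) {l₀ : Fin (2*m-1)} (hl₀ : (l₀:ℕ) = 2*m-2) :
    ∀ g ∈ GG m, g ≠ wt m → g.1 l₀ = 0 ∨ g.1 l₀ = (m:ℝ) := by
  intro g hg hne
  rcases hg with h | h | h | ⟨k, hk, he⟩
  · left; rw [h]; rfl
  · right; rw [h]; exact vv_apply_last m hl₀
  · exact absurd h hne
  · left; rw [← he]
    have hk' : (k:ℕ) < 2*m-2 := hk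
    exact if_neg (Fin.ne_of_val_ne (show (l₀:ℕ) ≠ (k:ℕ) by omega))

lemma hilb_aux (m : ℕ) (hm : 4 ≤ m) (H : Set (Pt (2*m-1) × ℝ))
    (hmin : IsMinHilbertBasis (Pm m) H) :
    H ⊆ GG m ∧ wt m ∈ H := by
  have hm4 : (4:ℝ) ≤ (m:ℝ) := by exact_mod_cast hm
  obtain ⟨⟨hfin, hsub, hgen⟩, hminimal⟩ := hmin
  have hHG : H ⊆ GG m := hminimal (GG m)
    ⟨GG_finite m, GG_subset_coneLat m hm, coneLat_subset_closure m hm⟩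
  refine ⟨hHG, ?_⟩
  by_contra hw
  have hl₀ : ((⟨2*m-2, by omega⟩ : Fin (2*m-1)):ℕ) = 2*m-2 := rfl
  set l₀ : Fin (2*m-1) := ⟨2*m-2, by omega⟩
  have hinv : ∀ p ∈ AddSubmonoid.closure H, ∃ c : ℕ, p.1 l₀ = (c:ℝ) * (m:ℝ) := by
    intro p hp
    induction hp using AddSubmonoid.closure_induction with
    | mem g hg =>
        have hgne : g ≠ wt m := fun hc => hw (hc ▸ hg)
        rcases GG_last m hm hl₀ g (hHG hg) hgne with h | h
        · exact ⟨0, by rw [h]; norm_num⟩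
        · exact ⟨1, by rw [h]; norm_num⟩
    | zero => exact ⟨0, by show (0:ℝ) = ((0:ℕ):ℝ) * (m:ℝ); norm_num⟩
    | add x y hx hy ihx ihy =>
        obtain ⟨c1, hc1⟩ := ihx
        obtain ⟨c2, hc2⟩ := ihy
        refine ⟨c1 + c2, ?_⟩
        have : (x + y).1 l₀ = x.1 l₀ + y.1 l₀ := rfl
        rw [this, hc1, hc2]
        push_cast
        ring
  obtain ⟨c, hc⟩ := hinv (wt m) (hgen (wt_mem_coneLat m hm))
  have h1 : (1:ℝ) = (c:ℝ) * (m:ℝ) := hc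
  rcases Nat.eq_zero_or_pos c with h0 | hpos
  · rw [h0] at h1; norm_num at h1
  · have : (1:ℝ) ≤ (c:ℝ) := by exact_mod_cast hpos
    nlinarith

end Ex23


/-- for `d = 2m-1`, `m ≥ 4`, the holes of `P` are exactly the points
`(j,…,j,2j)`, `1 ≤ j ≤ m-1` (so `μ_hole(P) = 2m-2 = d-1`), while the only minimal
Hilbert basis element of degree `≥ 2` is `(1,…,1,2)` (so `μ_Hilb(P) = 2`). -/
theorem box_and_hilb_of_Pm (m : ℕ) (hm : 4 ≤ m) :
    boxP (Pm m) (2*m-1) =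
      {p : Pt (2*m-1) × ℝ | ∃ j : ℕ, 1 ≤ j ∧ j ≤ m - 1 ∧
        p = (fun _ => (j : ℝ), (2*j : ℝ))} ∧
    IsGreatest {t : ℝ | ∃ p ∈ boxP (Pm m) (2*m-1), p.2 = t} ((2*m : ℝ) - 2) ∧
    ((2*m : ℝ) - 2 = ((2*m-1 : ℕ) : ℝ) - 1) ∧
    (∀ H, IsMinHilbertBasis (Pm m) H →
      {p ∈ H | 2 ≤ p.2} = {((fun _ => (1:ℝ)), (2:ℝ))} ∧
      IsGreatest {t : ℝ | ∃ p ∈ H, p.2 = t} 2) := by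
  have hm4 : (4:ℝ) ≤ (m:ℝ) := by exact_mod_cast hm
  have hcast : ((m-1:ℕ):ℝ) = (m:ℝ) - 1 := by
    push_cast [Nat.cast_sub (by omega : 1 ≤ m)]; ring
  refine ⟨Ex23.boxP_eq m hm, ⟨?_, ?_⟩, ?_, ?_⟩
  · refine ⟨((fun _ => ((m-1:ℕ):ℝ)), (2*((m-1:ℕ)):ℝ)), ?_, ?_⟩
    · rw [Ex23.boxP_eq m hm]
      exact ⟨m-1, by omega, le_refl _, rfl⟩
    · show (2*((m-1:ℕ)):ℝ) = 2*(m:ℝ)-2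
      push_cast [Nat.cast_sub (by omega : 1 ≤ m)]
      ring
  · rintro t ⟨p, hp, rfl⟩
    rw [Ex23.boxP_eq m hm] at hp
    obtain ⟨j, hj1, hj2, hpe⟩ := hp
    rw [hpe]
    show 2*(j:ℝ) ≤ 2*(m:ℝ) - 2
    have hle : (j:ℝ) ≤ ((m-1:ℕ):ℝ) := by exact_mod_cast hj2
    rw [hcast] at hle
    linarith
  · have h2m : ((2*m-1:ℕ):ℝ) = 2*(m:ℝ) - 1 := by
      push_cast [Nat.cast_sub (by omega : 1 ≤ 2*m)]; ring
    rw [h2m]; ring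
  · intro H hH
    obtain ⟨hHG, hwH⟩ := Ex23.hilb_aux m hm H hH
    refine ⟨?_, ⟨Ex23.wt m, hwH, rfl⟩, ?_⟩
    · apply Set.eq_of_subset_of_subset
      · rintro p ⟨hpH, hp2⟩
        rcases Ex23.GG_deg m p (hHG hpH) with h | h
        · rw [h] at hp2; norm_num at hp2
        · exact Set.mem_singleton_iff.2 h
      · intro p hp
        rw [Set.mem_singleton_iff] at hp
        rw [hp]
        exact ⟨hwH, by norm_num [Ex23.wt]⟩
    · rintro t ⟨p, hpH, rfl⟩
      rcases Ex23.GG_deg m p (hHG hpH) with h | h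
      · rw [h]; norm_num
      · rw [h]; norm_num [Ex23.wt]
end

section
/- Let d = 2m−1 with m ≥ 4 and P ⊂ ℝ^d the simplex with vertices 0, e₁,…,e_{d−1}, (m−1)(e₁+⋯+e_{d−1}) + m·e_d. Then 2P has the integer decomposition property (so μ_midp(P) = 2), kP fails (IDP) for every odd k with 3 ≤ k ≤ m−1, and kP has (IDP) for all k ≥ m. Hence μ_idp(P) = m−1 if m is odd and μ_idp(P) = m if m is even. -/
open scoped BigOperators Pointwise

namespace IDPAux

/-- the big vertex -/
def vbig (m : ℕ) : Pt (2*m-1) := fun k => if (k : ℕ) < 2*m-2 then ((m:ℝ) - 1) else (m:ℝ)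

/-- standard basis vector -/
def bas {N : ℕ} (i : Fin N) : Pt N := fun l => if l = i then (1:ℝ) else 0

lemma vbig_mem (m : ℕ) : vbig m ∈ Pm m :=
  subset_convexHull ℝ _ (Or.inr rfl)

lemma zero_mem_Vm (m : ℕ) : (0 : Pt (2*m-1)) ∈ Vm m := Or.inl (Or.inl rfl)

lemma zero_mem_Pm (m : ℕ) : (0 : Pt (2*m-1)) ∈ Pm m :=
  subset_convexHull ℝ _ (zero_mem_Vm m)

lemma bas_mem {m : ℕ} {i : Fin (2*m-1)} (h : (i : ℕ) < 2*m-2) : bas i ∈ Pm m :=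
  subset_convexHull ℝ _ (Or.inl (Or.inr ⟨i, h, rfl⟩))

lemma convex_Pm (m : ℕ) : Convex ℝ (Pm m) := convex_convexHull ℝ _

lemma Pm_nonempty (m : ℕ) : (Pm m).Nonempty := ⟨0, zero_mem_Pm m⟩

/-- monotonicity of dilation -/
lemma smul_Pm_mono (m : ℕ) {a b : ℝ} (ha : 0 ≤ a) (hab : a ≤ b) :
    a • Pm m ⊆ b • Pm m := by
  intro x hx
  have h : b • Pm m = a • Pm m + (b - a) • Pm m := by
    have := (convex_Pm m).add_smul ha (by linarith : (0:ℝ) ≤ b - a)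
    rw [← this]; ring_nf
  rw [h]
  have : x + (b - a) • (0 : Pt (2*m-1)) ∈ a • Pm m + (b - a) • Pm m :=
    Set.add_mem_add hx (Set.smul_mem_smul_set (zero_mem_Pm m))
  simpa using this

lemma mem_smul_add {m : ℕ} {a b : ℝ} (ha : 0 ≤ a) (hb : 0 ≤ b)
    {x y : Pt (2*m-1)} (hx : x ∈ a • Pm m) (hy : y ∈ b • Pm m) :
    x + y ∈ (a + b) • Pm m := by
  rw [(convex_Pm m).add_smul ha hb]
  exact Set.add_mem_add hx hy

end IDPAux
namespace IDPAux

lemma card_filter (m : ℕ) (hm : 1 ≤ m) :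
    (Finset.univ.filter (fun j : Fin (2*m-1) => (j : ℕ) < 2*m-2)).card = 2*m-2 := by
  rw [Finset.card_filter]
  rw [Fin.sum_univ_eq_sum_range (fun j => if j < 2*m-2 then 1 else 0) (2*m-1)]
  have h : (Finset.range (2*m-1)).filter (fun j => j < 2*m-2) = Finset.range (2*m-2) := by
    ext x; simp; omega
  rw [← Finset.sum_filter, h, Finset.sum_const, smul_eq_mul, mul_one, Finset.card_range]

lemma sum_smul_mem {m : ℕ} {ι : Type*} (F : Finset ι) (c : ι → ℕ) (p : ι → Pt (2*m-1))
    (h : ∀ i ∈ F, p i ∈ Pm m) :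
    ∑ i ∈ F, (c i : ℝ) • p i ∈ ((∑ i ∈ F, c i : ℕ) : ℝ) • Pm m := by
  classical
  induction F using Finset.induction with
  | empty =>
      simp [Set.zero_smul_set (Pm_nonempty m)]
  | insert _ _ hnotmem ih =>
      rename_i a F'
      rw [Finset.sum_insert hnotmem, Finset.sum_insert hnotmem, Nat.cast_add]
      exact mem_smul_add (Nat.cast_nonneg _) (Nat.cast_nonneg _)
        (Set.smul_mem_smul_set (h a (Finset.mem_insert_self a F')))
        (ih (fun i hi => h i (Finset.mem_insert_of_mem hi)))

lemma h1_mem_two (m : ℕ) (hm : 4 ≤ m) :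
    (fun _ => (1:ℝ) : Pt (2*m-1)) ∈ (2:ℝ) • Pm m := by
  classical
  have hmpos : (0:ℝ) < m := by positivity
  set F := Finset.univ.filter (fun j : Fin (2*m-1) => (j : ℕ) < 2*m-2) with hF
  have hsum : ∑ i ∈ F, ((1:ℕ):ℝ) • bas i ∈ ((∑ i ∈ F, (1:ℕ) : ℕ) : ℝ) • Pm m :=
    sum_smul_mem F _ _ (fun i hi => bas_mem (by simpa [hF] using hi))
  have hcard : (∑ i ∈ F, (1:ℕ)) = 2*m-2 := by
    simp [card_filter m (by omega)]; rw [hF, card_filter m (by omega)]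
  have hS : vbig m + ∑ i ∈ F, ((1:ℕ):ℝ) • bas i ∈ ((1:ℝ) + ((2*m-2 : ℕ):ℝ)) • Pm m := by
    refine mem_smul_add zero_le_one (by positivity) ?_ ?_
    · simpa using Set.smul_mem_smul_set (a := (1:ℝ)) (vbig_mem m)
    · rw [← hcard]; exact hsum
  have hSval : vbig m + ∑ i ∈ F, ((1:ℕ):ℝ) • bas i = fun _ => (m:ℝ) := by
    funext c
    have h2 : (∑ i ∈ F, ((1:ℕ):ℝ) • bas i) c = ∑ i ∈ F, bas i c := by
      simp [Finset.sum_apply]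
    show vbig m c + (∑ i ∈ F, ((1:ℕ):ℝ) • bas i) c = (m:ℝ)
    rw [h2]
    have hb : ∀ i ∈ F, bas i c = if c = i then (1:ℝ) else 0 := fun i _ => rfl
    rw [Finset.sum_congr rfl hb, Finset.sum_ite_eq F c (fun _ => (1:ℝ))]
    by_cases hc : (c:ℕ) < 2*m-2
    · have hcF : c ∈ F := by simp [hF, hc]
      simp only [vbig, if_pos hc, hcF, if_pos]
      ring
    · have hcF : c ∉ F := by simp [hF, hc]
      simp [vbig, hc, hcF]
  rw [hSval] at hS
  obtain ⟨y, hy, hyeq⟩ := hS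
  have h1eq : (fun _ => (1:ℝ) : Pt (2*m-1)) = ((1 + ((2*m-2:ℕ):ℝ))/m) • y := by
    have : (fun _ => (1:ℝ) : Pt (2*m-1)) = (1/(m:ℝ)) • (fun _ => (m:ℝ) : Pt (2*m-1)) := by
      funext c; simp; field_simp
    rw [this, ← hyeq, smul_smul]; ring_nf
  rw [h1eq]
  refine smul_Pm_mono m (by positivity) ?_ (Set.smul_mem_smul_set hy)
  have : ((2*m-2:ℕ):ℝ) = 2*(m:ℝ) - 2 := by
    push_cast [Nat.cast_sub (by omega : 2 ≤ 2*m)]; ring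
  rw [this]; rw [div_le_iff₀ hmpos]; linarith

end IDPAux
namespace IDPAux

/-- canonical representation function for lattice points -/
def repFun (m t s : ℕ) (κ : Fin (2*m-1) → ℕ) : Fin (2*m-1) → ℕ :=
  fun j => t + (if (j : ℕ) < 2*m-2 then s*(m-1) + κ j else s*m)

def Rep (m t s : ℕ) (κ : Fin (2*m-1) → ℕ) (α : Pt (2*m-1)) : Prop :=
  ∀ j, α j = (repFun m t s κ j : ℝ)

def wt (m t s : ℕ) (κ : Fin (2*m-1) → ℕ) : ℕ := 2*t + s + ∑ j, κ j

lemma rep_isLat {m t s : ℕ} {κ : Fin (2*m-1) → ℕ} {α : Pt (2*m-1)}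
    (h : Rep m t s κ α) : IsLat α :=
  fun j => ⟨(repFun m t s κ j : ℤ), by rw [h j]; push_cast; ring⟩

lemma rep_mem_dil {m t s n : ℕ} {κ : Fin (2*m-1) → ℕ} {α : Pt (2*m-1)}
    (hm : 4 ≤ m) (hrep : Rep m t s κ α) (hw : wt m t s κ ≤ n) :
    α ∈ dil n (Pm m) := by
  classical
  set F := Finset.univ.filter (fun j : Fin (2*m-1) => (j : ℕ) < 2*m-2) with hF
  have hα : α = (t:ℝ) • (fun _ => (1:ℝ) : Pt (2*m-1)) + (s:ℝ) • vbig m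
      + ∑ i ∈ F, ((κ i : ℕ) : ℝ) • bas i := by
    funext j
    have hsum : (∑ i ∈ F, ((κ i : ℕ) : ℝ) • bas i) j
        = if j ∈ F then (κ j : ℝ) else 0 := by
      rw [Finset.sum_apply]
      have hb : ∀ i ∈ F, (((κ i : ℕ) : ℝ) • bas i) j
          = if j = i then (κ i : ℝ) else 0 := by
        intro i _
        by_cases h : j = i <;> simp [bas, h]
      rw [Finset.sum_congr rfl hb, Finset.sum_ite_eq F j (fun i => (κ i : ℝ))]
    show α j = _ + _
    rw [hrep j]
    simp only [Pi.add_apply, Pi.smul_apply, smul_eq_mul, hsum, repFun]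
    by_cases hc : (j : ℕ) < 2*m-2
    · have hjF : j ∈ F := by simp [hF, hc]
      rw [if_pos hc, if_pos hjF]
      simp only [vbig, if_pos hc]
      push_cast [Nat.cast_sub (by omega : 1 ≤ m)]
      ring
    · have hjF : j ∉ F := by simp [hF, hc]
      rw [if_neg hc, if_neg hjF]
      simp only [vbig, if_neg hc]
      push_cast
      ring
  have h1 : (t:ℝ) • (fun _ => (1:ℝ) : Pt (2*m-1)) ∈ (((2*t : ℕ)):ℝ) • Pm m := by
    obtain ⟨y, hy, hyeq⟩ := h1_mem_two m hm
    rw [← hyeq, smul_smul]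
    have : (t:ℝ) * 2 = ((2*t : ℕ) : ℝ) := by push_cast; ring
    rw [this]
    exact Set.smul_mem_smul_set hy
  have h2 : (s:ℝ) • vbig m ∈ ((s:ℕ):ℝ) • Pm m := Set.smul_mem_smul_set (vbig_mem m)
  have h3 : ∑ i ∈ F, ((κ i : ℕ) : ℝ) • bas i ∈ ((∑ i ∈ F, κ i : ℕ) : ℝ) • Pm m :=
    sum_smul_mem F _ _ (fun i hi => bas_mem (by simpa [hF] using hi))
  have hmem : α ∈ (((2*t:ℕ):ℝ) + (s:ℝ) + ((∑ i ∈ F, κ i : ℕ):ℝ)) • Pm m := by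
    rw [hα]
    exact mem_smul_add (by positivity) (Nat.cast_nonneg _)
      (mem_smul_add (Nat.cast_nonneg _) (Nat.cast_nonneg _) h1 h2) h3
  refine smul_Pm_mono m (by positivity) ?_ hmem
  have hle : 2*t + s + ∑ i ∈ F, κ i ≤ n := by
    refine le_trans ?_ hw
    unfold wt
    have : ∑ i ∈ F, κ i ≤ ∑ i, κ i :=
      Finset.sum_le_sum_of_subset (Finset.filter_subset _ _)
    omega
  exact_mod_cast Nat.cast_le.mpr hle

end IDPAux
namespace IDPAux

lemma Vm_cases {m : ℕ} {v : Pt (2*m-1)} (hv : v ∈ Vm m) :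
    v = 0 ∨ (∃ k : Fin (2*m-1), (k : ℕ) < 2*m-2 ∧ v = bas k) ∨ v = vbig m := by
  rcases hv with (h | h) | h
  · exact Or.inl h
  · obtain ⟨k, hk, hvk⟩ := h
    exact Or.inr (Or.inl ⟨k, hk, hvk⟩)
  · exact Or.inr (Or.inr h)

lemma mem_halfspace {m n : ℕ} {φ : Pt (2*m-1) → ℝ} (hlin : IsLinearMap ℝ φ)
    {β : ℝ} (hv : ∀ v ∈ Vm m, φ v ≤ β) {α : Pt (2*m-1)}
    (hα : α ∈ dil n (Pm m)) : φ α ≤ (n : ℝ) * β := by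
  have hα' : α ∈ ((n:ℕ):ℝ) • Pm m := hα
  rw [Set.mem_smul_set] at hα'
  obtain ⟨y, hy, rfl⟩ := hα'
  have hsub : Pm m ⊆ {x | φ x ≤ β} :=
    convexHull_min hv (convex_halfSpace_le hlin β)
  have hφy : φ y ≤ β := hsub hy
  rw [hlin.map_smul]
  calc (n:ℝ) • φ y = (n:ℝ) * φ y := by rw [smul_eq_mul]
  _ ≤ (n:ℝ) * β := mul_le_mul_of_nonneg_left hφy (Nat.cast_nonneg n)

/-- The last coordinate index. -/
def Lidx (m : ℕ) (hm : 4 ≤ m) : Fin (2*m-1) := ⟨2*m-2, by omega⟩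

lemma bas_ne_L {m : ℕ} (hm : 4 ≤ m) {k : Fin (2*m-1)} (hk : (k : ℕ) < 2*m-2) :
    bas k (Lidx m hm) = 0 := by
  have hne : (⟨2*m-2, by omega⟩ : Fin (2*m-1)) ≠ k := by
    intro h
    have := congrArg Fin.val h
    simp at this
    omega
  simp [bas, Lidx, hne]

lemma vbig_L {m : ℕ} (hm : 4 ≤ m) : vbig m (Lidx m hm) = (m : ℝ) := by
  simp [vbig, Lidx]

lemma vbig_small {m : ℕ} {j : Fin (2*m-1)} (hj : (j : ℕ) < 2*m-2) :
    vbig m j = (m : ℝ) - 1 := by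
  simp only [vbig]; rw [if_pos hj]

/-- halfspace bound 1: last coordinate nonnegative -/
lemma bound1 {m n : ℕ} (hm : 4 ≤ m) {α : Pt (2*m-1)}
    (hα : α ∈ dil n (Pm m)) : 0 ≤ α (Lidx m hm) := by
  have hlin : IsLinearMap ℝ (fun x : Pt (2*m-1) => -(x (Lidx m hm))) := by
    constructor
    · intro x y; simp; ring
    · intro c x; simp [smul_eq_mul]; try ring
  have hv : ∀ v ∈ Vm m, -(v (Lidx m hm)) ≤ 0 := by
    intro v hv
    rcases Vm_cases hv with h | ⟨k, hk, h⟩ | h <;> subst h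
    · simp
    · rw [bas_ne_L hm hk]; simp
    · rw [vbig_L hm]; simp [Nat.cast_nonneg]
  have := mem_halfspace hlin hv hα
  simpa using this

/-- halfspace bound 2: coordinate comparison -/
lemma bound2 {m n : ℕ} (hm : 4 ≤ m) {i : Fin (2*m-1)} (hi : (i : ℕ) < 2*m-2)
    {α : Pt (2*m-1)} (hα : α ∈ dil n (Pm m)) :
    ((m:ℝ) - 1) * α (Lidx m hm) - (m:ℝ) * α i ≤ 0 := by
  have hlin : IsLinearMap ℝ
      (fun x : Pt (2*m-1) => ((m:ℝ)-1) * x (Lidx m hm) - (m:ℝ) * x i) := by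
    constructor
    · intro x y; simp; ring
    · intro c x; simp [smul_eq_mul]; try ring
  have hiL : i ≠ Lidx m hm := by
    intro h; rw [h] at hi; simp [Lidx] at hi
  have hv : ∀ v ∈ Vm m, ((m:ℝ)-1) * v (Lidx m hm) - (m:ℝ) * v i ≤ 0 := by
    intro v hv
    rcases Vm_cases hv with h | ⟨k, hk, h⟩ | h <;> subst h
    · simp
    · rw [bas_ne_L hm hk]
      simp only [bas]
      have : (0:ℝ) ≤ (m:ℝ) * (if i = k then (1:ℝ) else 0) := by
        split <;> simp [Nat.cast_nonneg]
      linarith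
    · rw [vbig_L hm, vbig_small hi]
      have : ((m:ℝ)-1)*(m:ℝ) - (m:ℝ)*((m:ℝ)-1) = 0 := by ring
      linarith
  have := mem_halfspace hlin hv hα
  simpa using this

/-- halfspace bound 3: total weight bound -/
lemma bound3 {m n : ℕ} (hm : 4 ≤ m) {α : Pt (2*m-1)}
    (hα : α ∈ dil n (Pm m)) :
    (m:ℝ) * (∑ j ∈ Finset.univ.filter (fun j : Fin (2*m-1) => (j:ℕ) < 2*m-2), α j)
      + (1 - ((m:ℝ)-1)*(2*(m:ℝ)-2)) * α (Lidx m hm) ≤ (n:ℝ) * (m:ℝ) := by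
  classical
  set F := Finset.univ.filter (fun j : Fin (2*m-1) => (j:ℕ) < 2*m-2) with hF
  have hlin : IsLinearMap ℝ
      (fun x : Pt (2*m-1) => (m:ℝ) * (∑ j ∈ F, x j)
        + (1 - ((m:ℝ)-1)*(2*(m:ℝ)-2)) * x (Lidx m hm)) := by
    constructor
    · intro x y
      simp only [Pi.add_apply, Finset.sum_add_distrib]
      ring
    · intro c x
      simp only [Pi.smul_apply, smul_eq_mul, ← Finset.mul_sum]
      ring
  have hcard : ((F.card : ℕ) : ℝ) = 2*(m:ℝ)-2 := by
    rw [hF, card_filter m (by omega)]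
    push_cast [Nat.cast_sub (by omega : 2 ≤ 2*m)]
    ring
  have hv : ∀ v ∈ Vm m, (m:ℝ) * (∑ j ∈ F, v j)
      + (1 - ((m:ℝ)-1)*(2*(m:ℝ)-2)) * v (Lidx m hm) ≤ (m:ℝ) := by
    intro v hv
    rcases Vm_cases hv with h | ⟨k, hk, h⟩ | h <;> subst h
    · simp
    · rw [bas_ne_L hm hk]
      have hsum : ∑ j ∈ F, bas k j = 1 := by
        have hb : ∀ j ∈ F, bas k j = if j = k then (1:ℝ) else 0 := fun j _ => rfl
        rw [Finset.sum_congr rfl hb, Finset.sum_ite_eq' F k (fun _ => (1:ℝ))]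
        rw [if_pos (by simp [hF, hk] : k ∈ F)]
      rw [hsum]; simp
    · rw [vbig_L hm]
      have hsum : ∑ j ∈ F, vbig m j = ((m:ℝ)-1) * (2*(m:ℝ)-2) := by
        have hb : ∀ j ∈ F, vbig m j = (m:ℝ)-1 := by
          intro j hj; exact vbig_small (by simpa [hF] using hj)
        rw [Finset.sum_congr rfl hb, Finset.sum_const, ← hcard]
        simp [mul_comm]
      rw [hsum]
      exact le_of_eq (by ring)
  have := mem_halfspace hlin hv hα
  simpa using this

end IDPAux
namespace IDPAux

lemma exists_rep {m n : ℕ} (hm : 4 ≤ m) {α : Pt (2*m-1)}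
    (hmem : α ∈ dil n (Pm m)) (hlat : IsLat α) :
    ∃ t s : ℕ, ∃ κ : Fin (2*m-1) → ℕ, t < m ∧ Rep m t s κ α ∧ wt m t s κ ≤ n := by
  classical
  choose z hz using hlat
  set L := Lidx m hm with hL
  have hq0 : (0:ℝ) ≤ α L := bound1 hm hmem
  have hzL0 : 0 ≤ z L := by
    rw [hz L] at hq0; exact_mod_cast hq0
  set Q : ℕ := (z L).toNat with hQ
  have hQz : (Q : ℤ) = z L := Int.toNat_of_nonneg hzL0
  set t := Q % m with ht
  set s := Q / m with hs
  have htm : t < m := Nat.mod_lt _ (by omega)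
  have hQts : m * s + t = Q := Nat.div_add_mod Q m
  have hzL : z L = (m:ℤ)*s + t := by
    rw [← hQz, ← hQts]; push_cast; ring
  -- nonnegativity of the residual coefficients
  have hA : ∀ j : Fin (2*m-1), (j:ℕ) < 2*m-2 →
      0 ≤ z j - ((m:ℤ)-1)*(s:ℤ) - (t:ℤ) := by
    intro j hj
    have h2 := bound2 hm hj hmem
    rw [hz j, hz L] at h2
    have h2' : ((m:ℤ)-1) * z L - (m:ℤ) * z j ≤ 0 := by exact_mod_cast h2
    rw [hzL] at h2'
    have hmA : -(t:ℤ) ≤ (m:ℤ) * (z j - ((m:ℤ)-1)*s - t) := by nlinarith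
    by_contra hneg
    push_neg at hneg
    have h1 : z j - ((m:ℤ)-1)*s - t ≤ -1 := by omega
    have h2'' : (m:ℤ) * (z j - ((m:ℤ)-1)*s - t) ≤ (m:ℤ) * (-1) :=
      mul_le_mul_of_nonneg_left h1 (by positivity)
    have htm' : (t:ℤ) < m := by exact_mod_cast htm
    linarith
  set κ : Fin (2*m-1) → ℕ :=
    fun j => if (j:ℕ) < 2*m-2 then (z j - ((m:ℤ)-1)*s - t).toNat else 0 with hκdef
  have hκ : ∀ j : Fin (2*m-1), (j:ℕ) < 2*m-2 →
      (κ j : ℤ) = z j - ((m:ℤ)-1)*s - t := by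
    intro j hj
    simp only [hκdef]
    rw [if_pos hj, Int.toNat_of_nonneg (hA j hj)]
  have hκ0 : ∀ j : Fin (2*m-1), ¬((j:ℕ) < 2*m-2) → κ j = 0 := by
    intro j hj; simp [hκdef, hj]
  have hrep : Rep m t s κ α := by
    intro j
    by_cases hj : (j:ℕ) < 2*m-2
    · have hZ : z j = ((t + (s*(m-1) + κ j) : ℕ) : ℤ) := by
        push_cast [Nat.cast_sub (show 1 ≤ m by omega)]
        rw [hκ j hj]; ring
      rw [hz j]
      simp only [repFun, if_pos hj]
      exact_mod_cast hZ
    · have hjL : j = L := by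
        apply Fin.ext
        have := j.isLt
        simp only [hL, Lidx]
        omega
      have hZ : z j = ((t + s*m : ℕ) : ℤ) := by
        rw [hjL, hzL]; push_cast; ring
      rw [hz j]
      simp only [repFun, if_neg hj]
      exact_mod_cast hZ
  refine ⟨t, s, κ, htm, hrep, ?_⟩
  -- the weight bound
  set F := Finset.univ.filter (fun j : Fin (2*m-1) => (j:ℕ) < 2*m-2) with hF
  have h3 := bound3 hm hmem
  rw [hz L] at h3
  have hsz : ∑ j ∈ F, α j = ((∑ j ∈ F, z j : ℤ) : ℝ) := by
    push_cast
    exact Finset.sum_congr rfl (fun j _ => hz j)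
  rw [hsz] at h3
  have h3' : (m:ℤ) * (∑ j ∈ F, z j) + (1 - ((m:ℤ)-1)*(2*(m:ℤ)-2)) * z L
      ≤ (n:ℤ) * m := by exact_mod_cast h3
  have hcard : (F.card : ℤ) = 2*(m:ℤ)-2 := by
    rw [hF, card_filter m (by omega)]
    push_cast [Nat.cast_sub (show 2 ≤ 2*m by omega)]
    ring
  have hsum : ∑ j ∈ F, z j
      = (2*(m:ℤ)-2) * (((m:ℤ)-1)*s + t) + ((∑ j ∈ F, κ j : ℕ) : ℤ) := by
    have step : ∀ j ∈ F, z j = (((m:ℤ)-1)*s + t) + (κ j : ℤ) := by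
      intro j hj
      have hj' : (j:ℕ) < 2*m-2 := by simpa [hF] using hj
      have := hκ j hj'
      linarith
    rw [Finset.sum_congr rfl step, Finset.sum_add_distrib, Finset.sum_const,
      nsmul_eq_mul, hcard]
    push_cast
    ring
  set K : ℕ := ∑ j, κ j with hK
  have hKF : (∑ j ∈ F, κ j) = K := by
    rw [hK]
    exact Finset.sum_subset (Finset.filter_subset _ _)
      (fun j _ hj => hκ0 j (by simpa [hF] using hj))
  rw [hKF] at hsum
  rw [hsum, hzL] at h3'
  have key : (m:ℤ) * ((2*(m:ℤ)-2) * (((m:ℤ)-1)*s + t) + (K:ℤ))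
      + (1 - ((m:ℤ)-1)*(2*(m:ℤ)-2)) * ((m:ℤ)*s + t)
      = (m:ℤ) * ((K:ℤ) + s + 2*t) - t := by ring
  rw [key] at h3'
  -- conclude wt ≤ n
  have htm' : (t:ℤ) ≤ (m:ℤ) - 1 := by
    have : (t:ℤ) < m := by exact_mod_cast htm
    omega
  have hfin : (2*t + s + K : ℤ) ≤ (n:ℤ) := by
    by_contra hcon
    push_neg at hcon
    have h4 : (n:ℤ) + 1 ≤ (K:ℤ) + s + 2*t := by linarith
    have h5 : (m:ℤ) * ((n:ℤ)+1) ≤ (m:ℤ) * ((K:ℤ) + s + 2*t) :=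
      mul_le_mul_of_nonneg_left h4 (by positivity)
    nlinarith
  unfold wt
  rw [← hK]
  exact_mod_cast hfin

end IDPAux
namespace IDPAux

lemma subvec {ι : Type*} [Fintype ι] (g : ι → ℕ) (d : ℕ) (hd : d ≤ ∑ i, g i) :
    ∃ g₁ : ι → ℕ, (∀ i, g₁ i ≤ g i) ∧ ∑ i, g₁ i = d := by
  classical
  induction d with
  | zero => exact ⟨0, fun i => Nat.zero_le _, by simp⟩
  | succ d ih =>
    obtain ⟨g₁, hle, hsum⟩ := ih (by omega)
    have hlt : ∑ i, g₁ i < ∑ i, g i := by omega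
    have hex : ∃ r, g₁ r < g r := by
      by_contra hc
      push_neg at hc
      have := Finset.sum_le_sum (fun i (_ : i ∈ Finset.univ) => hc i)
      omega
    obtain ⟨r, hr⟩ := hex
    refine ⟨Function.update g₁ r (g₁ r + 1), ?_, ?_⟩
    · intro i
      by_cases h : i = r
      · subst h; simp [Function.update]; omega
      · simp [Function.update, h]; exact hle i
    · rw [Finset.sum_update_of_mem (Finset.mem_univ r)]
      have herase := Finset.add_sum_erase Finset.univ g₁ (Finset.mem_univ r)
      rw [Finset.sdiff_singleton_eq_erase]
      omega

lemma vecsplit {ι : Type*} [Fintype ι] :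
    ∀ (l : ℕ) (g : ι → ℕ) (Ds : Fin l → ℕ), ∑ i, g i = ∑ j, Ds j →
    ∃ G : Fin l → ι → ℕ, (∀ i, ∑ j, G j i = g i) ∧ ∀ j, ∑ i, G j i = Ds j := by
  classical
  intro l
  induction l with
  | zero =>
    intro g Ds h
    simp only [Finset.univ_eq_empty, Finset.sum_empty] at h
    refine ⟨fun j => 0, ?_, fun j => j.elim0⟩
    intro i
    have : g i = 0 := by
      have h0 := Finset.sum_eq_zero_iff.mp h
      exact h0 i (Finset.mem_univ i)
    simp [this]
  | succ l ih =>
    intro g Ds h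
    have h0 : Ds 0 ≤ ∑ i, g i := by
      rw [h, Fin.sum_univ_succ]; omega
    obtain ⟨g₁, hle, hsum⟩ := subvec g (Ds 0) h0
    have hsub : ∑ i, (g i - g₁ i) = ∑ j : Fin l, Ds j.succ := by
      have hadd : ∑ i, (g i - g₁ i) + ∑ i, g₁ i = ∑ i, g i := by
        rw [← Finset.sum_add_distrib]
        exact Finset.sum_congr rfl (fun i _ => by have := hle i; omega)
      rw [Fin.sum_univ_succ] at h
      omega
    obtain ⟨G, hG1, hG2⟩ := ih (fun i => g i - g₁ i) (fun j => Ds j.succ) hsub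
    refine ⟨Fin.cons g₁ G, ?_, ?_⟩
    · intro i
      rw [Fin.sum_univ_succ]
      simp only [Fin.cons_zero, Fin.cons_succ]
      have := hG1 i
      rw [this]
      have := hle i
      omega
    · intro j
      induction j using Fin.cases with
      | zero => simpa using hsum
      | succ j' => simpa using hG2 j'

lemma split (k : ℕ) : ∀ (l t D : ℕ), 2*t + D ≤ l*k → t ≤ l*(k/2) →
    ∃ ts Ds : Fin l → ℕ, (∑ j, ts j = t) ∧ (∑ j, Ds j = D) ∧
      ∀ j, 2*ts j + Ds j ≤ k := by
  intro l
  induction l with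
  | zero =>
    intro t D h1 h2
    simp only [Nat.zero_mul] at h1 h2
    refine ⟨fun j => j.elim0, fun j => j.elim0, ?_, ?_, fun j => j.elim0⟩
    · simp; omega
    · simp; omega
  | succ l ih =>
    intro t D h1 h2
    have hAB : 2*(l*(k/2)) ≤ l*k := by
      have hk2 : 2*(k/2) ≤ k := by omega
      calc 2*(l*(k/2)) = l*(2*(k/2)) := by ring
      _ ≤ l*k := Nat.mul_le_mul_left l hk2
    set t1 := min t (k/2) with ht1
    set D1 := min D (k - 2*t1) with hD1
    have hsucc1 : (l+1)*k = l*k + k := by ring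
    have hsucc2 : (l+1)*(k/2) = l*(k/2) + k/2 := by ring
    rw [hsucc1] at h1
    rw [hsucc2] at h2
    obtain ⟨ts, Ds, hts, hDs, hbnd⟩ := ih (t - t1) (D - D1) (by omega) (by omega)
    refine ⟨Fin.cons t1 ts, Fin.cons D1 Ds, ?_, ?_, ?_⟩
    · rw [Fin.sum_univ_succ]
      simp only [Fin.cons_zero, Fin.cons_succ]
      rw [hts]; omega
    · rw [Fin.sum_univ_succ]
      simp only [Fin.cons_zero, Fin.cons_succ]
      rw [hDs]; omega
    · intro j
      induction j using Fin.cases with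
      | zero => simp only [Fin.cons_zero]; omega
      | succ j' => simpa using hbnd j'

end IDPAux
namespace IDPAux

lemma dil_dil {N : ℕ} (a b : ℕ) (P : Set (Pt N)) : dil a (dil b P) = dil (a*b) P := by
  unfold dil
  rw [smul_smul]
  norm_cast

lemma hasIDP_dil {m k : ℕ} (hm : 4 ≤ m) (hk2 : 2 ≤ k) (hk : k % 2 = 0 ∨ m ≤ k) :
    HasIDP (dil k (Pm m)) := by
  classical
  intro l hl α hα
  rw [dil_dil] at hα
  obtain ⟨hmem, hlat⟩ := hα
  obtain ⟨t, s, κ, htm, hrep, hwt⟩ := exists_rep hm hmem hlat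
  have hwt' : 2*t + (s + ∑ j, κ j) ≤ l*k := by
    unfold wt at hwt; omega
  have hpack : t ≤ l*(k/2) := by
    rcases hk with he | hge
    · have h2t : 2*t ≤ l*k := by omega
      have hlk : l*k = 2*(l*(k/2)) := by
        conv_lhs => rw [show k = 2*(k/2) by omega]
        ring
      omega
    · rcases Nat.lt_or_ge l 2 with h1 | h2
      · have hl1 : l = 1 := by omega
        subst hl1
        simp only [Nat.one_mul] at hwt' ⊢
        omega
      · have hk1 : k - 1 ≤ 2*(k/2) := by omega
        have h2k : 2*(k/2) ≤ l*(k/2) := Nat.mul_le_mul_right _ h2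
        omega
  obtain ⟨ts, Ds, hts, hDs, hbnd⟩ := split k l t (s + ∑ j, κ j) hwt' hpack
  set g : Option (Fin (2*m-1)) → ℕ := fun o => o.elim s κ with hg
  have hgsum : ∑ o, g o = ∑ j, Ds j := by
    rw [Fintype.sum_option, hDs]
    rfl
  obtain ⟨G, hG1, hG2⟩ := vecsplit l g Ds hgsum
  refine ⟨fun j => fun c =>
    ((repFun m (ts j) (G j none) (fun i => G j (some i)) c : ℕ) : ℝ), ?_, ?_⟩
  · intro j
    constructor
    · refine rep_mem_dil hm (fun c => rfl) ?_
      unfold wt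
      have h2 := hG2 j
      rw [Fintype.sum_option] at h2
      have hb := hbnd j
      have hbeta : ∑ j_1, (fun i => G j (some i)) j_1 = ∑ i, G j (some i) := rfl
      omega
    · exact rep_isLat (fun c => rfl)
  · funext c
    rw [Finset.sum_apply, hrep c, ← Nat.cast_sum]
    congr 1
    have hnone : ∑ j, G j none = s := hG1 none
    have hsome : ∀ i, ∑ j, G j (some i) = κ i := fun i => hG1 (some i)
    unfold repFun
    by_cases hc : (c:ℕ) < 2*m-2
    · simp only [if_pos hc]
      rw [Finset.sum_add_distrib, Finset.sum_add_distrib, hts, ← Finset.sum_mul,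
        hnone, hsome c]
    · simp only [if_neg hc]
      rw [Finset.sum_add_distrib, hts, ← Finset.sum_mul, hnone]

lemma not_idp_odd {m k : ℕ} (hm : 4 ≤ m) (hk : Odd k) (hk3 : 3 ≤ k) (hkm : k ≤ m-1) :
    ¬ HasIDP (dil k (Pm m)) := by
  intro hidp
  set α : Pt (2*m-1) := fun _ => (k:ℝ) with hα
  have hrep : Rep m k 0 (fun _ => 0) α := by
    intro j
    unfold repFun
    split <;> simp [hα]
  have hwt : wt m k 0 (fun _ => 0) ≤ 2*k := by
    unfold wt; simp
  have hmem : α ∈ latPts (dil 2 (dil k (Pm m))) := by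
    rw [dil_dil]
    exact ⟨rep_mem_dil hm hrep hwt, rep_isLat hrep⟩
  obtain ⟨f, hf, hsum⟩ := hidp 2 (by norm_num) α hmem
  obtain ⟨t0, s0, κ0, ht0, hrep0, hw0⟩ := exists_rep hm (hf 0).1 (hf 0).2
  obtain ⟨t1, s1, κ1, ht1, hrep1, hw1⟩ := exists_rep hm (hf 1).1 (hf 1).2
  set L := Lidx m hm with hLdef
  have hLn : ¬((L:ℕ) < 2*m-2) := by simp [hLdef, Lidx]
  have hLeq : (k:ℝ) = ((t0 + s0*m : ℕ):ℝ) + ((t1 + s1*m : ℕ):ℝ) := by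
    have := congrFun hsum L
    rw [Finset.sum_apply, Fin.sum_univ_two, hrep0 L, hrep1 L] at this
    simp only [repFun, if_neg hLn] at this
    simpa [hα] using this
  have hLnat : k = (t0 + s0*m) + (t1 + s1*m) := by exact_mod_cast hLeq
  have hs0 : s0 = 0 ∧ s1 = 0 := by
    by_contra hc
    have hpos : 0 < s0 ∨ 0 < s1 := by omega
    have hmk : m ≤ k := by
      rcases hpos with h | h
      · have : m ≤ s0 * m := Nat.le_mul_of_pos_left m h
        omega
      · have : m ≤ s1 * m := Nat.le_mul_of_pos_left m h
        omega
    omega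
  obtain ⟨hs00, hs10⟩ := hs0
  subst hs00; subst hs10
  have hw0' : 2*t0 ≤ k := by unfold wt at hw0; omega
  have hw1' : 2*t1 ≤ k := by unfold wt at hw1; omega
  obtain ⟨r, hr⟩ := hk
  omega

lemma not_idp_one {m : ℕ} (hm : 4 ≤ m) : ¬ HasIDP (dil 1 (Pm m)) := by
  intro hidp
  set α : Pt (2*m-1) := fun _ => (1:ℝ) with hα
  have hrep : Rep m 1 0 (fun _ => 0) α := by
    intro j
    unfold repFun
    split <;> simp [hα]
  have hmem : α ∈ latPts (dil 2 (dil 1 (Pm m))) := by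
    rw [dil_dil]
    exact ⟨rep_mem_dil hm hrep (by unfold wt; simp), rep_isLat hrep⟩
  obtain ⟨f, hf, hsum⟩ := hidp 2 (by norm_num) α hmem
  obtain ⟨t0, s0, κ0, ht0, hrep0, hw0⟩ := exists_rep hm (hf 0).1 (hf 0).2
  obtain ⟨t1, s1, κ1, ht1, hrep1, hw1⟩ := exists_rep hm (hf 1).1 (hf 1).2
  set L := Lidx m hm with hLdef
  have hLn : ¬((L:ℕ) < 2*m-2) := by simp [hLdef, Lidx]
  have hLeq : (1:ℝ) = ((t0 + s0*m : ℕ):ℝ) + ((t1 + s1*m : ℕ):ℝ) := by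
    have := congrFun hsum L
    rw [Finset.sum_apply, Fin.sum_univ_two, hrep0 L, hrep1 L] at this
    simp only [repFun, if_neg hLn] at this
    simpa [hα] using this
  have hLnat : 1 = (t0 + s0*m) + (t1 + s1*m) := by exact_mod_cast hLeq
  have hw0' : 2*t0 + s0 ≤ 1 := by unfold wt at hw0; omega
  have hw1' : 2*t1 + s1 ≤ 1 := by unfold wt at hw1; omega
  have hs0 : s0 = 0 ∧ s1 = 0 := by
    by_contra hc
    have hpos : 0 < s0 ∨ 0 < s1 := by omega
    rcases hpos with h | h
    · have : m ≤ s0 * m := Nat.le_mul_of_pos_left m h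
      omega
    · have : m ≤ s1 * m := Nat.le_mul_of_pos_left m h
      omega
  obtain ⟨hs00, hs10⟩ := hs0
  subst hs00; subst hs10
  omega

end IDPAux


/-- for `d = 2m-1`, `m ≥ 4`: `2P` has (IDP) (and `μ_midp(P) = 2`),
`kP` fails (IDP) for odd `3 ≤ k ≤ m-1`, `kP` has (IDP) for all `k ≥ m`, and
`μ_idp(P) = m-1` if `m` is odd, `m` if `m` is even. -/
theorem idp_behaviour_of_Pm (m : ℕ) (hm : 4 ≤ m) :
    HasIDP (dil 2 (Pm m)) ∧
    IsLeast {k : ℕ | 0 < k ∧ HasIDP (dil k (Pm m))} 2 ∧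
    (∀ k, Odd k → 3 ≤ k → k ≤ m - 1 → ¬ HasIDP (dil k (Pm m))) ∧
    (∀ k, m ≤ k → HasIDP (dil k (Pm m))) ∧
    IsLeast {k : ℕ | 0 < k ∧ ∀ n, k ≤ n → HasIDP (dil n (Pm m))}
      (if Odd m then m - 1 else m) := by
  have h2 : HasIDP (dil 2 (Pm m)) := IDPAux.hasIDP_dil hm (by norm_num) (Or.inl rfl)
  refine ⟨h2, ⟨⟨by norm_num, h2⟩, ?_⟩, ?_, ?_, ?_⟩
  · intro k hk
    have hne : k ≠ 1 := fun h => IDPAux.not_idp_one hm (h ▸ hk.2)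
    have := hk.1
    omega
  · intro k hodd h3 hkm
    exact IDPAux.not_idp_odd hm hodd h3 hkm
  · intro k hk
    exact IDPAux.hasIDP_dil hm (by omega) (Or.inr hk)
  · by_cases hodd : Odd m
    · rw [if_pos hodd]
      obtain ⟨r, hr⟩ := hodd
      constructor
      · refine ⟨by omega, ?_⟩
        intro n hn
        exact IDPAux.hasIDP_dil hm (by omega) (by omega)
      · intro x hx
        by_contra hcon
        push_neg at hcon
        have hidp : HasIDP (dil (m-2) (Pm m)) := hx.2 (m-2) (by omega)
        exact IDPAux.not_idp_odd hm ⟨r-1, by omega⟩ (by omega) (by omega) hidp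
    · rw [if_neg hodd]
      have heven : Even m := Nat.not_odd_iff_even.mp hodd
      obtain ⟨r, hr⟩ := heven
      constructor
      · refine ⟨by omega, ?_⟩
        intro n hn
        exact IDPAux.hasIDP_dil hm (by omega) (Or.inr hn)
      · intro x hx
        by_contra hcon
        push_neg at hcon
        have hidp : HasIDP (dil (m-1) (Pm m)) := hx.2 (m-1) (by omega)
        exact IDPAux.not_idp_odd hm ⟨r-1, by omega⟩ (by omega) (by omega) hidp
end

section
/- The Minkowski sum of two integral polytopes each having the integer decomposition property need not have it: the triangle T = conv{(0,0,0),(1,0,0),(0,1,0)} and the segment S = conv{(0,0,0),(1,1,3)} each possess (IDP), but their Minkowski sum T + S does not possess (IDP). -/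
open scoped BigOperators Pointwise

lemma zero_eq_v : (0 : Pt 3) = ![0,0,0] := by funext i; fin_cases i <;> simp

lemma convex_triC : Convex ℝ {x : Pt 3 | 0 ≤ x 0 ∧ 0 ≤ x 1 ∧ x 0 + x 1 ≤ 1 ∧ x 2 = 0} := by
  intro x hx y hy a b ha hb hab
  obtain ⟨h0, h1, h2, h3⟩ := hx
  obtain ⟨g0, g1, g2, g3⟩ := hy
  refine ⟨?_, ?_, ?_, ?_⟩ <;> simp only [Pi.add_apply, Pi.smul_apply, smul_eq_mul]
  · positivity
  · positivity
  · nlinarith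
  · rw [h3, g3]; ring

lemma mem_tri {x : Pt 3}
    (hx : x ∈ convexHull ℝ ({![0,0,0], ![1,0,0], ![0,1,0]} : Set (Pt 3))) :
    0 ≤ x 0 ∧ 0 ≤ x 1 ∧ x 0 + x 1 ≤ 1 ∧ x 2 = 0 := by
  refine convexHull_min ?_ convex_triC hx
  intro v hv
  simp only [Set.mem_insert_iff, Set.mem_singleton_iff] at hv
  rcases hv with h | h | h <;> subst h <;> norm_num <;> rfl

lemma mem_seg {x : Pt 3}
    (hx : x ∈ convexHull ℝ ({![0,0,0], ![1,1,3]} : Set (Pt 3))) :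
    ∃ μ : ℝ, 0 ≤ μ ∧ μ ≤ 1 ∧ x = μ • ![1,1,3] := by
  rw [convexHull_pair] at hx
  obtain ⟨a, b, ha, hb, hab, h⟩ := hx
  refine ⟨b, hb, by linarith, ?_⟩
  rw [← h]; funext i; fin_cases i <;> simp

lemma sum_if (k a b : ℕ) (h : a + b ≤ k) (v w : Pt 3) :
    ∑ i : Fin k, (if (i : ℕ) < a then v else if (i : ℕ) < a + b then w else 0)
      = (a : ℝ) • v + (b : ℝ) • w := by
  rw [Fin.sum_univ_eq_sum_range (fun i => if i < a then v else if i < a + b then w else 0) k]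
  rw [Finset.sum_ite, Finset.sum_ite]
  have h1 : (Finset.range k).filter (fun i => i < a) = Finset.range a := by
    ext i; simp; omega
  have h2 : ((Finset.range k).filter (fun i => ¬ i < a)).filter (fun i => i < a + b)
      = Finset.Ico a (a + b) := by
    ext i; simp; omega
  rw [h1, h2]
  simp [Finset.sum_const, ← Nat.cast_smul_eq_nsmul ℝ]

lemma lat_v (p q r : ℤ) : IsLat (![(p:ℝ), q, r] : Pt 3) := by
  intro j
  fin_cases j
  exacts [⟨p, rfl⟩, ⟨q, rfl⟩, ⟨r, rfl⟩]

lemma idp_tri : HasIDP (convexHull ℝ ({![0,0,0], ![1,0,0], ![0,1,0]} : Set (Pt 3))) := by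
  intro k hk α hα
  obtain ⟨hmem, hlat⟩ := hα
  obtain ⟨q, hq, hkq⟩ := Set.mem_smul_set.mp hmem
  obtain ⟨hq0, hq1, hqsum, hq2⟩ := mem_tri hq
  have hα0 : α 0 = (k : ℝ) * q 0 := by rw [← hkq]; simp
  have hα1 : α 1 = (k : ℝ) * q 1 := by rw [← hkq]; simp
  have hα2 : α 2 = (k : ℝ) * q 2 := by rw [← hkq]; simp
  obtain ⟨z0, hz0⟩ := hlat 0
  obtain ⟨z1, hz1⟩ := hlat 1
  have hz0n : 0 ≤ z0 := by
    have : (0:ℝ) ≤ (z0:ℝ) := by rw [← hz0, hα0]; positivity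
    exact_mod_cast this
  have hz1n : 0 ≤ z1 := by
    have : (0:ℝ) ≤ (z1:ℝ) := by rw [← hz1, hα1]; positivity
    exact_mod_cast this
  have hsum : z0 + z1 ≤ (k:ℤ) := by
    have : (z0:ℝ) + (z1:ℝ) ≤ (k:ℝ) := by
      have hk' : (0:ℝ) ≤ (k:ℝ) := Nat.cast_nonneg k
      rw [← hz0, ← hz1, hα0, hα1]; nlinarith
    exact_mod_cast this
  set a := z0.toNat with ha
  set b := z1.toNat with hb
  have hab : a + b ≤ k := by omega
  refine ⟨fun i => if (i : ℕ) < a then ![1,0,0] else if (i : ℕ) < a + b then ![0,1,0] else 0,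
    ?_, ?_⟩
  · intro i
    have m0 : (![0,0,0] : Pt 3) ∈ convexHull ℝ ({![0,0,0], ![1,0,0], ![0,1,0]} : Set (Pt 3)) :=
      subset_convexHull ℝ _ (by simp)
    have m1 : (![1,0,0] : Pt 3) ∈ convexHull ℝ ({![0,0,0], ![1,0,0], ![0,1,0]} : Set (Pt 3)) :=
      subset_convexHull ℝ _ (by simp)
    have m2 : (![0,1,0] : Pt 3) ∈ convexHull ℝ ({![0,0,0], ![1,0,0], ![0,1,0]} : Set (Pt 3)) :=
      subset_convexHull ℝ _ (by simp)
    by_cases h1 : (i : ℕ) < a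
    · simp only [h1, if_true]
      exact ⟨m1, by have := lat_v 1 0 0; norm_num at this ⊢; exact this⟩
    · by_cases h2 : (i : ℕ) < a + b
      · simp only [h1, h2, if_false, if_true]
        exact ⟨m2, by have := lat_v 0 1 0; norm_num at this ⊢; exact this⟩
      · simp only [h1, h2, if_false]
        rw [zero_eq_v]
        exact ⟨m0, by have := lat_v 0 0 0; norm_num at this ⊢; exact this⟩
  · rw [sum_if k a b hab]
    have e0 : (a : ℝ) = α 0 := by
      rw [hz0, ha]; norm_cast; omega
    have e1 : (b : ℝ) = α 1 := by
      rw [hz1, hb]; norm_cast; omega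
    have e2 : α 2 = 0 := by rw [hα2, hq2]; ring
    funext i
    fin_cases i <;> simp [e2] <;> [skip; skip] <;> linarith

lemma idp_seg : HasIDP (convexHull ℝ ({![0,0,0], ![1,1,3]} : Set (Pt 3))) := by
  intro k hk α hα
  obtain ⟨hmem, hlat⟩ := hα
  obtain ⟨q, hq, hkq⟩ := Set.mem_smul_set.mp hmem
  obtain ⟨μ, hμ0, hμ1, hqv⟩ := mem_seg hq
  have hαv : α = ((k:ℝ) * μ) • ![1,1,3] := by rw [← hkq, hqv, smul_smul]
  have hα0 : α 0 = (k:ℝ) * μ := by rw [hαv]; simp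
  obtain ⟨z0, hz0⟩ := hlat 0
  have hk' : (0:ℝ) ≤ (k:ℝ) := Nat.cast_nonneg k
  have hz0n : 0 ≤ z0 := by
    have : (0:ℝ) ≤ (z0:ℝ) := by rw [← hz0, hα0]; positivity
    exact_mod_cast this
  have hz0k : z0 ≤ (k:ℤ) := by
    have : (z0:ℝ) ≤ (k:ℝ) := by rw [← hz0, hα0]; nlinarith
    exact_mod_cast this
  set m := z0.toNat with hm
  have hmk : m + 0 ≤ k := by omega
  refine ⟨fun i => if (i : ℕ) < m then ![1,1,3] else if (i : ℕ) < m + 0 then ![1,1,3] else 0,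
    ?_, ?_⟩
  · intro i
    have m0 : (![0,0,0] : Pt 3) ∈ convexHull ℝ ({![0,0,0], ![1,1,3]} : Set (Pt 3)) :=
      subset_convexHull ℝ _ (by simp)
    have m1 : (![1,1,3] : Pt 3) ∈ convexHull ℝ ({![0,0,0], ![1,1,3]} : Set (Pt 3)) :=
      subset_convexHull ℝ _ (by simp)
    by_cases h1 : (i : ℕ) < m
    · simp only [h1, if_true]
      exact ⟨m1, by have := lat_v 1 1 3; norm_num at this ⊢; exact this⟩
    · simp only [h1, Nat.add_zero, if_false]
      rw [zero_eq_v]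
      exact ⟨m0, by have := lat_v 0 0 0; norm_num at this ⊢; exact this⟩
  · rw [sum_if k m 0 hmk]
    have e0 : ((k:ℝ) * μ) = (m : ℝ) := by
      rw [← hα0, hz0, hm]; norm_cast; omega
    rw [hαv, e0]
    simp

lemma noZ1 {x : Pt 3}
    (hx : x ∈ convexHull ℝ ({![0,0,0], ![1,0,0], ![0,1,0]} : Set (Pt 3)) +
          convexHull ℝ ({![0,0,0], ![1,1,3]} : Set (Pt 3)))
    (hlat : IsLat x) : x 2 ≠ 1 := by
  intro h1
  obtain ⟨t, ht, s, hs, hts⟩ := Set.mem_add.mp hx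
  obtain ⟨ht0, ht1, htsum, ht2⟩ := mem_tri ht
  obtain ⟨μ, hμ0, hμ1, hsv⟩ := mem_seg hs
  have hx0 : x 0 = t 0 + μ := by rw [← hts, hsv]; simp
  have hx1 : x 1 = t 1 + μ := by rw [← hts, hsv]; simp
  have hx2 : x 2 = 3 * μ := by
    rw [← hts, hsv]; simp [ht2]; ring
  have hμ : μ = 1/3 := by rw [hx2] at h1; linarith
  obtain ⟨z0, hz0⟩ := hlat 0
  obtain ⟨z1, hz1⟩ := hlat 1
  have e0 : z0 = 1 := by
    have l1 : (0:ℝ) < z0 := by rw [← hz0, hx0, hμ]; linarith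
    have l2 : (z0:ℝ) < 2 := by rw [← hz0, hx0, hμ]; linarith
    have l1' : 0 < z0 := by exact_mod_cast l1
    have l2' : z0 < 2 := by exact_mod_cast l2
    omega
  have e1 : z1 = 1 := by
    have l1 : (0:ℝ) < z1 := by rw [← hz1, hx1, hμ]; linarith
    have l2 : (z1:ℝ) < 2 := by rw [← hz1, hx1, hμ]; linarith
    have l1' : 0 < z1 := by exact_mod_cast l1
    have l2' : z1 < 2 := by exact_mod_cast l2
    omega
  have ht0' : t 0 = 2/3 := by
    have : x 0 = 1 := by rw [hz0, e0]; norm_num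
    rw [hx0, hμ] at this; linarith
  have ht1' : t 1 = 2/3 := by
    have : x 1 = 1 := by rw [hz1, e1]; norm_num
    rw [hx1, hμ] at this; linarith
  rw [ht0', ht1'] at htsum
  norm_num at htsum

lemma not_idp_sum : ¬ HasIDP (convexHull ℝ ({![0,0,0], ![1,0,0], ![0,1,0]} : Set (Pt 3)) +
              convexHull ℝ ({![0,0,0], ![1,1,3]} : Set (Pt 3))) := by
  intro h
  set T := convexHull ℝ ({![0,0,0], ![1,0,0], ![0,1,0]} : Set (Pt 3)) with hT
  set S := convexHull ℝ ({![0,0,0], ![1,1,3]} : Set (Pt 3)) with hS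
  have hTc : Convex ℝ T := convex_convexHull ℝ _
  have hSc : Convex ℝ S := convex_convexHull ℝ _
  -- t = (1/3,1/3,0) ∈ T
  have v0T : (![0,0,0] : Pt 3) ∈ T := subset_convexHull ℝ _ (by simp)
  have v1T : (![1,0,0] : Pt 3) ∈ T := subset_convexHull ℝ _ (by simp)
  have v2T : (![0,1,0] : Pt 3) ∈ T := subset_convexHull ℝ _ (by simp)
  have hmid : (![1/2,1/2,0] : Pt 3) ∈ T := by
    refine hTc.segment_subset v1T v2T ⟨1/2, 1/2, by norm_num, by norm_num, by norm_num, ?_⟩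
    funext i; fin_cases i <;> norm_num
  have htT : (![1/3,1/3,0] : Pt 3) ∈ T := by
    refine hTc.segment_subset v0T hmid ⟨1/3, 2/3, by norm_num, by norm_num, by norm_num, ?_⟩
    funext i; fin_cases i <;> norm_num
  have v0S : (![0,0,0] : Pt 3) ∈ S := subset_convexHull ℝ _ (by simp)
  have v1S : (![1,1,3] : Pt 3) ∈ S := subset_convexHull ℝ _ (by simp)
  have hsS : (![1/6,1/6,1/2] : Pt 3) ∈ S := by
    refine hSc.segment_subset v0S v1S ⟨5/6, 1/6, by norm_num, by norm_num, by norm_num, ?_⟩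
    funext i; fin_cases i <;> norm_num
  have hqQ : (![1/2,1/2,1/2] : Pt 3) ∈ T + S := by
    have : (![1/2,1/2,1/2] : Pt 3) = ![1/3,1/3,0] + ![1/6,1/6,1/2] := by
      funext i; fin_cases i <;> norm_num
    rw [this]
    exact Set.add_mem_add htT hsS
  have hαmem : (![1,1,1] : Pt 3) ∈ latPts (dil 2 (T + S)) := by
    constructor
    · exact Set.mem_smul_set.mpr ⟨![1/2,1/2,1/2], hqQ, by
        funext i; fin_cases i <;> norm_num⟩
    · have := lat_v 1 1 1; norm_num at this ⊢; exact this
  obtain ⟨f, hf, hsum⟩ := h 2 (by norm_num) _ hαmem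
  have hsum2 : (![1,1,1] : Pt 3) = f 0 + f 1 := by rw [hsum, Fin.sum_univ_two]
  obtain ⟨hx, hxl⟩ := hf 0
  obtain ⟨hy, hyl⟩ := hf 1
  -- z-coordinates
  obtain ⟨zx, hzx⟩ := hxl 2
  obtain ⟨zy, hzy⟩ := hyl 2
  have hxy2 : f 0 2 + f 1 2 = 1 := by
    have := congrFun hsum2 2
    simp at this; linarith [this]
  -- bounds on z-coords
  have zb : ∀ w : Pt 3, w ∈ T + S → 0 ≤ w 2 := by
    intro w hw
    obtain ⟨t, ht, s, hs, hts⟩ := Set.mem_add.mp hw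
    obtain ⟨_, _, _, ht2⟩ := mem_tri ht
    obtain ⟨μ, hμ0, hμ1, hsv⟩ := mem_seg hs
    have : w 2 = 3 * μ := by rw [← hts, hsv]; simp [ht2]; ring
    rw [this]; linarith
  have hzx0 : 0 ≤ zx := by
    have : (0:ℝ) ≤ (zx:ℝ) := by rw [← hzx]; exact zb _ hx
    exact_mod_cast this
  have hzy0 : 0 ≤ zy := by
    have : (0:ℝ) ≤ (zy:ℝ) := by rw [← hzy]; exact zb _ hy
    exact_mod_cast this
  have hzsum : zx + zy = 1 := by
    have : (zx:ℝ) + (zy:ℝ) = 1 := by rw [← hzx, ← hzy]; exact hxy2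
    exact_mod_cast this
  have : zx = 1 ∨ zy = 1 := by omega
  rcases this with h | h
  · exact noZ1 hx hxl (by rw [hzx, h]; norm_num)
  · exact noZ1 hy hyl (by rw [hzy, h]; norm_num)

/-- the triangle `conv{(0,0,0),(1,0,0),(0,1,0)}` and the segment
`conv{(0,0,0),(1,1,3)}` each possess (IDP), but their Minkowski sum does not. -/
theorem minkowski_sum_not_idp :
    HasIDP (convexHull ℝ ({![0,0,0], ![1,0,0], ![0,1,0]} : Set (Pt 3))) ∧
    HasIDP (convexHull ℝ ({![0,0,0], ![1,1,3]} : Set (Pt 3))) ∧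
    ¬ HasIDP (convexHull ℝ ({![0,0,0], ![1,0,0], ![0,1,0]} : Set (Pt 3)) +
              convexHull ℝ ({![0,0,0], ![1,1,3]} : Set (Pt 3))) := ⟨idp_tri, idp_seg, not_idp_sum⟩
end
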